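/- arXiv:1711.09193 — 7 statements merged into one kernel-verified Lean document; each statement's English description precedes it below -/
import Mathlib

section
/- Let w = Σ_{k=1}^K c_k v_k be a mixture density on ℝ, where each component density v_k has finite moments of all orders and admits an orthonormal polynomial basis {H_n^k} with three-term recurrence coefficients (a_n^k, b_n^k) and Jacobi matrices J_N^k ∈ ℝ^{(N+1)×(N+1)}, and where w itself admits an orthonormal polynomial basis with three-term recurrence coefficients (a_n, b_n). Fix N ∈ ℕ and define, for each k, vectors z_{−1}^k = 0, z_0^k = e₁ (the first standard basis vector of ℝ^{N+1}), and z_{n+1}^k = (J_N^k − a_n I) z_n^k − (b_n)² z_{n−1}^k; set ψ_n = Σ_{k=1}^K c_k (z_n^k)ᵀ z_n^k and φ_n = Σ_{k=1}^K c_k (z_n^k)ᵀ J_N^k z_n^k. Then b_n = √(ψ_n/ψ_{n−1}) for n = 1,…,N and a_n = φ_n/ψ_n for n = 0,…,N−1. -/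
open MeasureTheory Polynomial Matrix

noncomputable def myip (v : ℝ → ℝ) (p q : Polynomial ℝ) : ℝ :=
  ∫ x : ℝ, (p * q).eval x * v x

variable (v : ℝ → ℝ)

lemma integrable_pow_mul (hm : Measurable v) (hnn : ∀ x, 0 ≤ v x)
  (hmom : ∀ n : ℕ, Integrable (fun x : ℝ => |x| ^ n * v x)) (n : ℕ) : Integrable (fun x : ℝ => x ^ n * v x) := by
  refine (hmom n).mono' ?_ ?_
  · exact ((measurable_id.pow_const n).mul hm).aestronglyMeasurable
  · filter_upwards with x
    rw [Real.norm_eq_abs, abs_mul, abs_pow, abs_of_nonneg (hnn x)]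

lemma integrable_poly (hm : Measurable v) (hnn : ∀ x, 0 ≤ v x)
  (hmom : ∀ n : ℕ, Integrable (fun x : ℝ => |x| ^ n * v x)) (p : Polynomial ℝ) :
    Integrable (fun x : ℝ => p.eval x * v x) := by
  have h : (fun x : ℝ => p.eval x * v x)
      = fun x => ∑ i ∈ Finset.range (p.natDegree + 1), p.coeff i * (x ^ i * v x) := by
    funext x
    rw [Polynomial.eval_eq_sum_range, Finset.sum_mul]
    exact Finset.sum_congr rfl fun i _ => by ring
  rw [h]
  exact integrable_finset_sum _ fun i _ => (integrable_pow_mul v hm hnn hmom i).const_mul _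

lemma myip_comm (p q : Polynomial ℝ) : myip v p q = myip v q p := by
  unfold myip; rw [mul_comm]

lemma myip_C_mul_left (s : ℝ) (p q : Polynomial ℝ) :
    myip v (C s * p) q = s * myip v p q := by
  unfold myip
  rw [← integral_const_mul]
  congr 1; funext x; simp [eval_mul]; ring

lemma myip_C_mul_right (s : ℝ) (p q : Polynomial ℝ) :
    myip v p (C s * q) = s * myip v p q := by
  rw [myip_comm, myip_C_mul_left, myip_comm]

lemma myip_add_left (hm : Measurable v) (hnn : ∀ x, 0 ≤ v x)
  (hmom : ∀ n : ℕ, Integrable (fun x : ℝ => |x| ^ n * v x)) (p q r : Polynomial ℝ) :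
    myip v (p + q) r = myip v p r + myip v q r := by
  unfold myip
  simp only [add_mul, eval_add]
  exact integral_add (integrable_poly v hm hnn hmom (p*r)) (integrable_poly v hm hnn hmom (q*r))

lemma myip_sub_left (hm : Measurable v) (hnn : ∀ x, 0 ≤ v x)
  (hmom : ∀ n : ℕ, Integrable (fun x : ℝ => |x| ^ n * v x)) (p q r : Polynomial ℝ) :
    myip v (p - q) r = myip v p r - myip v q r := by
  unfold myip
  simp only [sub_mul, eval_sub]
  exact integral_sub (integrable_poly v hm hnn hmom (p*r)) (integrable_poly v hm hnn hmom (q*r))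

lemma myip_add_right (hm : Measurable v) (hnn : ∀ x, 0 ≤ v x)
  (hmom : ∀ n : ℕ, Integrable (fun x : ℝ => |x| ^ n * v x)) (p q r : Polynomial ℝ) :
    myip v p (q + r) = myip v p q + myip v p r := by
  rw [myip_comm, myip_add_left v hm hnn hmom, myip_comm, myip_comm v r p]

lemma myip_sub_right (hm : Measurable v) (hnn : ∀ x, 0 ≤ v x)
  (hmom : ∀ n : ℕ, Integrable (fun x : ℝ => |x| ^ n * v x)) (p q r : Polynomial ℝ) :
    myip v p (q - r) = myip v p q - myip v p r := by
  rw [myip_comm, myip_sub_left v hm hnn hmom, myip_comm, myip_comm v r p]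

lemma myip_sum_left (hm : Measurable v) (hnn : ∀ x, 0 ≤ v x)
  (hmom : ∀ n : ℕ, Integrable (fun x : ℝ => |x| ^ n * v x)) (d : ℕ → ℝ) (Q : ℕ → Polynomial ℝ) (s : Finset ℕ) (r : Polynomial ℝ) :
    myip v (∑ j ∈ s, C (d j) * Q j) r = ∑ j ∈ s, d j * myip v (Q j) r := by
  classical
  induction s using Finset.induction_on with
  | empty => simp [myip]
  | insert _ _ hj ih =>
    rw [Finset.sum_insert hj, Finset.sum_insert hj, myip_add_left v hm hnn hmom,
      myip_C_mul_left, ih]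

lemma myip_sum_right (hm : Measurable v) (hnn : ∀ x, 0 ≤ v x)
  (hmom : ∀ n : ℕ, Integrable (fun x : ℝ => |x| ^ n * v x)) (d : ℕ → ℝ) (Q : ℕ → Polynomial ℝ) (s : Finset ℕ) (r : Polynomial ℝ) :
    myip v r (∑ j ∈ s, C (d j) * Q j) = ∑ j ∈ s, d j * myip v r (Q j) := by
  rw [myip_comm, myip_sum_left v hm hnn hmom]
  exact Finset.sum_congr rfl fun j _ => by rw [myip_comm]


lemma span_poly (Q : ℕ → Polynomial ℝ) (hdeg : ∀ n, (Q n).natDegree = n)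
    (hne : ∀ n, Q n ≠ 0) :
    ∀ (M : ℕ) (p : Polynomial ℝ), p.natDegree ≤ M →
      ∃ d : ℕ → ℝ, p = ∑ j ∈ Finset.range (M + 1), C (d j) * Q j := by
  intro M
  induction M with
  | zero =>
    intro p hp
    have h0 : Q 0 = C ((Q 0).coeff 0) := Polynomial.eq_C_of_natDegree_le_zero (by rw [hdeg])
    have hq : (Q 0).coeff 0 ≠ 0 := by
      intro h; exact hne 0 (by rw [h0, h, map_zero])
    refine ⟨fun _ => p.coeff 0 / (Q 0).coeff 0, ?_⟩
    have hone : C (p.coeff 0 / (Q 0).coeff 0) * Q 0 = C (p.coeff 0) := by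
      nth_rewrite 2 [h0]
      rw [← C_mul, div_mul_cancel₀ _ hq]
    rw [Finset.sum_range_one, hone]
    exact Polynomial.eq_C_of_natDegree_le_zero hp
  | succ M ih =>
    intro p hp
    have hlc : (Q (M+1)).coeff (M+1) ≠ 0 := by
      have h1 : (Q (M+1)).coeff (M+1) = (Q (M+1)).leadingCoeff := by
        rw [Polynomial.leadingCoeff, hdeg]
      rw [h1]
      exact Polynomial.leadingCoeff_ne_zero.mpr (hne _)
    set t := p.coeff (M+1) / (Q (M+1)).coeff (M+1) with ht
    have hq : (p - C t * Q (M+1)).natDegree ≤ M := by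
      rw [Polynomial.natDegree_le_iff_coeff_eq_zero]
      intro m hm
      rw [Polynomial.coeff_sub, Polynomial.coeff_C_mul]
      by_cases hm1 : m = M + 1
      · subst hm1
        rw [ht, div_mul_cancel₀ _ hlc, sub_self]
      · rw [Polynomial.coeff_eq_zero_of_natDegree_lt (by omega),
          Polynomial.coeff_eq_zero_of_natDegree_lt (by rw [hdeg]; omega)]
        ring
    obtain ⟨d, hd⟩ := ih _ hq
    refine ⟨Function.update d (M+1) t, ?_⟩
    rw [Finset.sum_range_succ, Function.update_self]
    have h2 : ∑ j ∈ Finset.range (M+1), C (Function.update d (M+1) t j) * Q j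
        = ∑ j ∈ Finset.range (M+1), C (d j) * Q j := by
      refine Finset.sum_congr rfl fun j hj => ?_
      rw [Function.update_of_ne (by simp at hj; omega)]
    rw [h2, ← hd]
    ring


/-- Recurrence coefficients of the orthonormal polynomial basis of a
mixture density `w = ∑ c_k v_k` computed from the Jacobi matrices of the
components: with `z`-vectors defined by `z₋₁ = 0`, `z₀ = e₁`,
`z_{n+1} = (J^k − a_n I) z_n − b_n² z_{n−1}`, and
`ψ_n = ∑_k c_k z_nᵀ z_n`, `φ_n = ∑_k c_k z_nᵀ J^k z_n`, one has
`b_n = √(ψ_n/ψ_{n−1})` for `1 ≤ n ≤ N` and `a_n = φ_n/ψ_n` for `n < N`.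
(The orthonormal basis of the mixture is normalized so that `b_n > 0`.) -/
theorem mixture_recurrence_coefficients
    (K N : ℕ) (hK : 0 < K)
    (c : Fin K → ℝ) (hc_pos : ∀ k, 0 < c k) (hc_sum : ∑ k, c k = 1)
    (v : Fin K → ℝ → ℝ) (hv_meas : ∀ k, Measurable (v k))
    (hv_nonneg : ∀ k x, 0 ≤ v k x) (hv_prob : ∀ k, ∫ x : ℝ, v k x = 1)
    (hv_mom : ∀ k (n : ℕ), Integrable (fun x : ℝ => |x| ^ n * v k x))
    (w : ℝ → ℝ) (hw : ∀ x, w x = ∑ k, c k * v k x)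
    -- orthonormal polynomial bases of the components, with their recurrences
    (Hk : Fin K → ℕ → Polynomial ℝ)
    (hHk0 : ∀ k, Hk k 0 = 1)
    (hHkdeg : ∀ k n, (Hk k n).natDegree = n)
    (hHkortho : ∀ k m n, ∫ x : ℝ, (Hk k m).eval x * (Hk k n).eval x * v k x
      = if m = n then 1 else 0)
    (ak bk : Fin K → ℕ → ℝ)
    (hHkrec0 : ∀ k, X * Hk k 0 = C (bk k 1) * Hk k 1 + C (ak k 0) * Hk k 0)
    (hHkrec : ∀ k n, 1 ≤ n → X * Hk k n
      = C (bk k (n + 1)) * Hk k (n + 1) + C (ak k n) * Hk k n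
        + C (bk k n) * Hk k (n - 1))
    -- the Jacobi matrices of the components
    (J : Fin K → Matrix (Fin (N + 1)) (Fin (N + 1)) ℝ)
    (hJ : ∀ k (i j : Fin (N + 1)), J k i j =
      if (i : ℕ) = (j : ℕ) then ak k i
      else if (i : ℕ) + 1 = (j : ℕ) then bk k j
      else if (j : ℕ) + 1 = (i : ℕ) then bk k i
      else 0)
    -- orthonormal polynomial basis of the mixture, with its recurrence
    (H : ℕ → Polynomial ℝ)
    (hH0 : H 0 = 1) (hHdeg : ∀ n, (H n).natDegree = n)
    (hHortho : ∀ m n, ∫ x : ℝ, (H m).eval x * (H n).eval x * w x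
      = if m = n then 1 else 0)
    (a b : ℕ → ℝ)
    (hHrec0 : X * H 0 = C (b 1) * H 1 + C (a 0) * H 0)
    (hHrec : ∀ n, 1 ≤ n → X * H n
      = C (b (n + 1)) * H (n + 1) + C (a n) * H n + C (b n) * H (n - 1))
    (hb_pos : ∀ n, 1 ≤ n → n ≤ N → 0 < b n)
    -- the z-vectors and the quantities ψ, φ
    (z : Fin K → ℕ → (Fin (N + 1) → ℝ))
    (hz0 : ∀ k, z k 0 = Pi.single 0 1)
    (hz1 : ∀ k, z k 1 = (J k).mulVec (z k 0) - a 0 • z k 0)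
    (hzrec : ∀ k n, 1 ≤ n → z k (n + 1)
      = (J k).mulVec (z k n) - a n • z k n - (b n) ^ 2 • z k (n - 1))
    (ψ φ : ℕ → ℝ)
    (hψ : ∀ n, ψ n = ∑ k, c k * (z k n ⬝ᵥ z k n))
    (hφ : ∀ n, φ n = ∑ k, c k * (z k n ⬝ᵥ (J k).mulVec (z k n))) :
    (∀ n, 1 ≤ n → n ≤ N → b n = Real.sqrt (ψ n / ψ (n - 1))) ∧
      (∀ n, n < N → a n = φ n / ψ n) := by
  classical
  have hwmeas : Measurable w := by
    have h : w = fun x => ∑ k, c k * v k x := funext hw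
    rw [h]
    exact Finset.measurable_sum _ fun k _ => (hv_meas k).const_mul _
  have hwnn : ∀ x, 0 ≤ w x := fun x => by
    rw [hw]; exact Finset.sum_nonneg fun k _ => mul_nonneg (hc_pos k).le (hv_nonneg k x)
  have hwmom : ∀ n : ℕ, Integrable (fun x : ℝ => |x| ^ n * w x) := by
    intro n
    have h : (fun x : ℝ => |x| ^ n * w x) = fun x => ∑ k, c k * (|x| ^ n * v k x) := by
      funext x; rw [hw, Finset.mul_sum]; exact Finset.sum_congr rfl fun k _ => by ring
    rw [h]
    exact integrable_finset_sum _ fun k _ => ((hv_mom k n).const_mul _)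
  have hkne : ∀ k n, Hk k n ≠ 0 := by
    intro k n
    cases n with
    | zero => rw [hHk0]; exact one_ne_zero
    | succ m => intro h; have h2 := hHkdeg k (m+1); rw [h] at h2; simp at h2
  have honk : ∀ k m n, myip (v k) (Hk k m) (Hk k n) = if m = n then 1 else 0 := by
    intro k m n
    rw [← hHkortho k m n]
    unfold myip
    simp only [eval_mul]
  have honw : ∀ m n, myip w (H m) (H n) = if m = n then 1 else 0 := by
    intro m n
    rw [← hHortho m n]
    unfold myip
    simp only [eval_mul]
  have hipw : ∀ p q, myip w p q = ∑ k, c k * myip (v k) p q := by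
    intro p q
    unfold myip
    have h1 : (fun x : ℝ => (p*q).eval x * w x)
        = fun x => ∑ k, c k * ((p*q).eval x * v k x) := by
      funext x; rw [hw, Finset.mul_sum]
      exact Finset.sum_congr rfl fun k _ => by ring
    rw [h1, integral_finset_sum _ fun k _ =>
      ((integrable_poly (v k) (hv_meas k) (hv_nonneg k) (hv_mom k) (p*q)).const_mul _)]
    exact Finset.sum_congr rfl fun k _ => integral_const_mul _ _
  set β : ℕ → ℝ := fun n => ∏ j ∈ Finset.range n, b (j+1) with hβ
  have hβsucc : ∀ n, β (n+1) = β n * b (n+1) := fun n => Finset.prod_range_succ _ n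
  have hβ0 : β 0 = 1 := Finset.prod_range_zero _
  have hβpos : ∀ n, n ≤ N → 0 < β n := by
    intro n hn
    refine Finset.prod_pos fun j hj => ?_
    simp only [Finset.mem_range] at hj
    exact hb_pos (j+1) (by omega) (by omega)
  set P : ℕ → Polynomial ℝ := fun n => C (β n) * H n with hPdef
  have hP0 : P 0 = 1 := by simp [hPdef, hβ0, hH0]
  have hPdeg : ∀ n, n ≤ N → (P n).natDegree = n := by
    intro n hn
    show (C (β n) * H n).natDegree = n
    rw [Polynomial.natDegree_C_mul (ne_of_gt (hβpos n hn)), hHdeg]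
  have hβ1 : β 1 = b 1 := by
    show ∏ j ∈ Finset.range 1, b (j+1) = b 1
    simp
  have hPrec0 : P 1 = (X - C (a 0)) * P 0 := by
    show C (β 1) * H 1 = (X - C (a 0)) * (C (β 0) * H 0)
    rw [hβ1, hβ0]
    simp only [C_mul, C_1, one_mul]
    linear_combination -hHrec0
  have hPrec : ∀ n, 1 ≤ n → P (n+1) = (X - C (a n)) * P n - C ((b n)^2) * P (n-1) := by
    intro n hn
    obtain ⟨m, rfl⟩ : ∃ m, n = m + 1 := ⟨n - 1, by omega⟩
    show C (β (m+2)) * H (m+2) = (X - C (a (m+1))) * (C (β (m+1)) * H (m+1))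
      - C ((b (m+1))^2) * (C (β (m+1-1)) * H (m+1-1))
    simp only [Nat.add_sub_cancel]
    rw [hβsucc (m+1), hβsucc m]
    simp only [C_mul, C_pow]
    have hr := hHrec (m+1) (by omega)
    simp only [Nat.add_sub_cancel] at hr
    linear_combination (-(C (β m) * C (b (m+1)))) * hr
  clear_value β P
  -- vanishing of high coefficients
  have hvan : ∀ k n, n ≤ N → ∀ m, N < m → myip (v k) (P n) (Hk k m) = 0 := by
    intro k n hn m hm
    obtain ⟨d, hd⟩ := span_poly (Hk k) (hHkdeg k) (hkne k) N (P n)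
      (by rw [hPdeg n hn]; exact hn)
    rw [hd, myip_sum_left (v k) (hv_meas k) (hv_nonneg k) (hv_mom k)]
    refine Finset.sum_eq_zero fun j hj => ?_
    rw [honk k j m, if_neg (by simp only [Finset.mem_range] at hj; omega)]
    ring
  -- expansion coefficients
  have hcoeffs : ∀ k n, n ≤ N → ∃ d : ℕ → ℝ,
      P n = ∑ j ∈ Finset.range (N+1), C (d j) * Hk k j ∧
      ∀ m, m ≤ N → myip (v k) (P n) (Hk k m) = d m := by
    intro k n hn
    obtain ⟨d, hd⟩ := span_poly (Hk k) (hHkdeg k) (hkne k) N (P n)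
      (by rw [hPdeg n hn]; exact hn)
    refine ⟨d, hd, fun m hm => ?_⟩
    rw [hd, myip_sum_left (v k) (hv_meas k) (hv_nonneg k) (hv_mom k)]
    simp only [honk, mul_ite, mul_one, mul_zero]
    rw [Finset.sum_ite_eq' (Finset.range (N+1)) m d]
    exact if_pos (Finset.mem_range.mpr (by omega))
  -- the mulVec identity
  have hmulvec : ∀ k n, n ≤ N → ∀ i : Fin (N+1),
      (J k).mulVec (fun j : Fin (N+1) => myip (v k) (P n) (Hk k (j : ℕ))) i
        = myip (v k) (X * P n) (Hk k (i : ℕ)) := by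
    intro k n hn i
    have hL : (J k).mulVec (fun j : Fin (N+1) => myip (v k) (P n) (Hk k (j : ℕ))) i
        = ak k (i : ℕ) * myip (v k) (P n) (Hk k (i : ℕ))
          + bk k ((i : ℕ)+1) * myip (v k) (P n) (Hk k ((i : ℕ)+1))
          + (if (i : ℕ) = 0 then 0
             else bk k (i : ℕ) * myip (v k) (P n) (Hk k ((i : ℕ)-1))) := by
      simp only [Matrix.mulVec, dotProduct]
      have hsplit : ∀ j : Fin (N+1), J k i j * myip (v k) (P n) (Hk k (j : ℕ))
          = (if (i : ℕ) = (j : ℕ) then ak k (i : ℕ) * myip (v k) (P n) (Hk k (j : ℕ)) else 0)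
            + (if (i : ℕ) + 1 = (j : ℕ) then bk k (j : ℕ) * myip (v k) (P n) (Hk k (j : ℕ)) else 0)
            + (if (j : ℕ) + 1 = (i : ℕ) then bk k (i : ℕ) * myip (v k) (P n) (Hk k (j : ℕ)) else 0) := by
        intro j
        rw [hJ k i j]
        split_ifs <;> first | ring1 | (exfalso; omega)
      simp only [hsplit]
      rw [Finset.sum_add_distrib, Finset.sum_add_distrib]
      have hA : (∑ j : Fin (N+1), if (i : ℕ) = (j : ℕ) then
          ak k (i : ℕ) * myip (v k) (P n) (Hk k (j : ℕ)) else 0)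
          = ak k (i : ℕ) * myip (v k) (P n) (Hk k (i : ℕ)) := by
        rw [Fin.sum_univ_eq_sum_range
          (fun m => if (i : ℕ) = m then ak k (i : ℕ) * myip (v k) (P n) (Hk k m) else 0) (N+1)]
        rw [Finset.sum_eq_single ((i : ℕ))
          (fun m _ hm => if_neg fun h => hm h.symm)
          (fun h => absurd (Finset.mem_range.mpr i.isLt) h)]
        exact if_pos rfl
      have hB : (∑ j : Fin (N+1), if (i : ℕ) + 1 = (j : ℕ) then
          bk k (j : ℕ) * myip (v k) (P n) (Hk k (j : ℕ)) else 0)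
          = bk k ((i : ℕ)+1) * myip (v k) (P n) (Hk k ((i : ℕ)+1)) := by
        rw [Fin.sum_univ_eq_sum_range
          (fun m => if (i : ℕ) + 1 = m then bk k m * myip (v k) (P n) (Hk k m) else 0) (N+1)]
        rw [Finset.sum_eq_single ((i : ℕ) + 1)
          (fun m _ hm => if_neg fun h => hm h.symm)
          (fun h => by
            rw [if_pos rfl, hvan k n hn ((i : ℕ)+1)
              (by simp only [Finset.mem_range] at h; omega)]
            ring)]
        exact if_pos rfl
      have hC : (∑ j : Fin (N+1), if (j : ℕ) + 1 = (i : ℕ) then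
          bk k (i : ℕ) * myip (v k) (P n) (Hk k (j : ℕ)) else 0)
          = (if (i : ℕ) = 0 then 0
             else bk k (i : ℕ) * myip (v k) (P n) (Hk k ((i : ℕ)-1))) := by
        rw [Fin.sum_univ_eq_sum_range
          (fun m => if m + 1 = (i : ℕ) then bk k (i : ℕ) * myip (v k) (P n) (Hk k m) else 0) (N+1)]
        rw [Finset.sum_eq_single ((i : ℕ) - 1)
          (fun m _ hm => if_neg (by omega))
          (fun h => absurd (Finset.mem_range.mpr (by omega)) h)]
        by_cases hi0 : (i : ℕ) = 0
        · rw [if_pos hi0, if_neg (by omega)]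
        · rw [if_neg hi0, if_pos (by omega)]
      rw [hA, hB, hC]
    have hR : myip (v k) (X * P n) (Hk k (i : ℕ))
        = ak k (i : ℕ) * myip (v k) (P n) (Hk k (i : ℕ))
          + bk k ((i : ℕ)+1) * myip (v k) (P n) (Hk k ((i : ℕ)+1))
          + (if (i : ℕ) = 0 then 0
             else bk k (i : ℕ) * myip (v k) (P n) (Hk k ((i : ℕ)-1))) := by
      have hswap : myip (v k) (X * P n) (Hk k (i : ℕ))
          = myip (v k) (P n) (X * Hk k (i : ℕ)) := by
        unfold myip
        rw [show (X * P n) * Hk k (i : ℕ) = P n * (X * Hk k (i : ℕ)) by ring]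
      rw [hswap]
      by_cases hi0 : (i : ℕ) = 0
      · rw [hi0, hHkrec0 k, if_pos rfl,
          myip_add_right (v k) (hv_meas k) (hv_nonneg k) (hv_mom k),
          myip_C_mul_right, myip_C_mul_right]
        ring
      · rw [hHkrec k (i : ℕ) (by omega), if_neg hi0,
          myip_add_right (v k) (hv_meas k) (hv_nonneg k) (hv_mom k),
          myip_add_right (v k) (hv_meas k) (hv_nonneg k) (hv_mom k),
          myip_C_mul_right, myip_C_mul_right, myip_C_mul_right]
        ring
    rw [hL, hR]
  -- identification of the z vectors
  have hzid : ∀ n, n ≤ N → ∀ k,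
      z k n = fun i : Fin (N+1) => myip (v k) (P n) (Hk k (i : ℕ)) := by
    intro n
    induction n using Nat.strong_induction_on with
    | _ n ih =>
      intro hn k
      match n, hn with
      | 0, hn =>
        funext i
        rw [hz0 k]
        have h1 : myip (v k) (P 0) (Hk k (i : ℕ)) = if 0 = (i : ℕ) then 1 else 0 := by
          rw [hP0, ← hHk0 k]; exact honk k 0 (i : ℕ)
        show (Pi.single 0 1 : Fin (N+1) → ℝ) i = _
        rw [h1, Pi.single_apply]
        by_cases h : (i : ℕ) = 0
        · rw [if_pos (by exact Fin.ext h), if_pos h.symm]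
        · rw [if_neg (fun hh => h (by rw [hh]; rfl)), if_neg (fun hh => h hh.symm)]
      | 1, hn =>
        funext i
        rw [hz1 k]
        simp only [Pi.sub_apply, Pi.smul_apply, smul_eq_mul]
        rw [ih 0 (by omega) (by omega) k, hmulvec k 0 (by omega) i]
        have h2 : myip (v k) (P 1) (Hk k (i : ℕ))
            = myip (v k) (X * P 0) (Hk k (i : ℕ))
              - a 0 * myip (v k) (P 0) (Hk k (i : ℕ)) := by
          rw [hPrec0, show (X - C (a 0)) * P 0 = X * P 0 - C (a 0) * P 0 by ring,
            myip_sub_left (v k) (hv_meas k) (hv_nonneg k) (hv_mom k), myip_C_mul_left]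
        rw [h2]
      | (m+2), hn =>
        funext i
        rw [hzrec k (m+1) (by omega)]
        simp only [Pi.sub_apply, Pi.smul_apply, smul_eq_mul, Nat.add_sub_cancel]
        rw [ih (m+1) (by omega) (by omega) k, ih m (by omega) (by omega) k,
          hmulvec k (m+1) (by omega) i]
        have h2 : myip (v k) (P (m+2)) (Hk k (i : ℕ))
            = myip (v k) (X * P (m+1)) (Hk k (i : ℕ))
              - a (m+1) * myip (v k) (P (m+1)) (Hk k (i : ℕ))
              - (b (m+1))^2 * myip (v k) (P m) (Hk k (i : ℕ)) := by
          have hp := hPrec (m+1) (by omega)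
          simp only [Nat.add_sub_cancel] at hp
          rw [hp, show (X - C (a (m+1))) * P (m+1) - C ((b (m+1))^2) * P m
              = (X * P (m+1) - C (a (m+1)) * P (m+1)) - C ((b (m+1))^2) * P m by ring,
            myip_sub_left (v k) (hv_meas k) (hv_nonneg k) (hv_mom k),
            myip_sub_left (v k) (hv_meas k) (hv_nonneg k) (hv_mom k),
            myip_C_mul_left, myip_C_mul_left]
        rw [h2]
  -- ψ as a w-inner product
  have hdotψ : ∀ n, n ≤ N → ψ n = myip w (P n) (P n) := by
    intro n hn
    rw [hψ n, hipw]
    refine Finset.sum_congr rfl fun k _ => ?_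
    congr 1
    obtain ⟨d, hd, hdc⟩ := hcoeffs k n hn
    rw [hzid n hn k]
    have h1 : (fun i : Fin (N+1) => myip (v k) (P n) (Hk k (i : ℕ))) ⬝ᵥ
        (fun i : Fin (N+1) => myip (v k) (P n) (Hk k (i : ℕ)))
        = ∑ j ∈ Finset.range (N+1), d j * d j := by
      simp only [dotProduct]
      rw [Fin.sum_univ_eq_sum_range
        (fun m => myip (v k) (P n) (Hk k m) * myip (v k) (P n) (Hk k m)) (N+1)]
      refine Finset.sum_congr rfl fun j hj => ?_
      rw [hdc j (by simp only [Finset.mem_range] at hj; omega)]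
    rw [h1]
    have h2 : myip (v k) (P n) (P n)
        = ∑ j ∈ Finset.range (N+1), d j * myip (v k) (P n) (Hk k j) := by
      nth_rewrite 2 [hd]
      rw [myip_sum_right (v k) (hv_meas k) (hv_nonneg k) (hv_mom k)]
    rw [h2]
    refine Finset.sum_congr rfl fun j hj => ?_
    rw [hdc j (by simp only [Finset.mem_range] at hj; omega)]
  -- φ as a w-inner product
  have hdotφ : ∀ n, n ≤ N → φ n = myip w (X * P n) (P n) := by
    intro n hn
    rw [hφ n, hipw]
    refine Finset.sum_congr rfl fun k _ => ?_
    congr 1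
    obtain ⟨d, hd, hdc⟩ := hcoeffs k n hn
    rw [hzid n hn k]
    have h1 : (fun i : Fin (N+1) => myip (v k) (P n) (Hk k (i : ℕ))) ⬝ᵥ
        (J k).mulVec (fun i : Fin (N+1) => myip (v k) (P n) (Hk k (i : ℕ)))
        = ∑ j ∈ Finset.range (N+1), d j * myip (v k) (X * P n) (Hk k j) := by
      simp only [dotProduct, hmulvec k n hn]
      rw [Fin.sum_univ_eq_sum_range
        (fun m => myip (v k) (P n) (Hk k m) * myip (v k) (X * P n) (Hk k m)) (N+1)]
      refine Finset.sum_congr rfl fun j hj => ?_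
      rw [hdc j (by simp only [Finset.mem_range] at hj; omega)]
    rw [h1]
    have h2 : myip (v k) (X * P n) (P n)
        = ∑ j ∈ Finset.range (N+1), d j * myip (v k) (X * P n) (Hk k j) := by
      nth_rewrite 2 [hd]
      rw [myip_sum_right (v k) (hv_meas k) (hv_nonneg k) (hv_mom k)]
    rw [h2]
  -- values
  have hψval : ∀ n, n ≤ N → ψ n = β n ^ 2 := by
    intro n hn
    rw [hdotψ n hn]
    simp only [hPdef]
    rw [myip_C_mul_left, myip_C_mul_right, honw n n, if_pos rfl]
    ring
  have hφval : ∀ n, n < N → φ n = a n * β n ^ 2 := by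
    intro n hn
    rw [hdotφ n (le_of_lt hn)]
    simp only [hPdef]
    rw [show X * (C (β n) * H n) = C (β n) * (X * H n) by ring,
      myip_C_mul_left, myip_C_mul_right]
    have hx : myip w (X * H n) (H n) = a n := by
      rcases Nat.eq_zero_or_pos n with rfl | hn1
      · rw [hHrec0, myip_add_left w hwmeas hwnn hwmom, myip_C_mul_left, myip_C_mul_left,
          honw 1 0, honw 0 0]
        simp
      · rw [hHrec n hn1, myip_add_left w hwmeas hwnn hwmom,
          myip_add_left w hwmeas hwnn hwmom,
          myip_C_mul_left, myip_C_mul_left, myip_C_mul_left,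
          honw (n+1) n, honw n n, honw (n-1) n,
          if_neg (by omega), if_pos rfl, if_neg (by omega)]
        ring
    rw [hx]
    ring
  constructor
  · intro n h1 hN
    have hn1 : n - 1 ≤ N := by omega
    rw [hψval n hN, hψval (n-1) hn1]
    have hb : β n = β (n-1) * b n := by
      obtain ⟨m, rfl⟩ : ∃ m, n = m + 1 := ⟨n - 1, by omega⟩
      simp only [Nat.add_sub_cancel]
      exact hβsucc m
    have h0 : β (n-1) ≠ 0 := ne_of_gt (hβpos _ hn1)
    rw [hb, show (β (n-1) * b n)^2 / β (n-1)^2 = b n ^ 2 by field_simp,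
      Real.sqrt_sq (hb_pos n h1 hN).le]
  · intro n hn
    have h0 : β n ≠ 0 := ne_of_gt (hβpos _ (le_of_lt hn))
    rw [hφval n hn, hψval n (le_of_lt hn)]
    field_simp
end

section
/- Let v be a probability density on ℝ with finite moments of all orders whose support is infinite (so the Gram matrices of monomials are positive definite), with orthonormal polynomial basis {H_n} and Jacobi matrix J_N ∈ ℝ^{(N+1)×(N+1)}. Then for every polynomial p of degree at most 2N+1, ∫_ℝ p(x) v(x) dx = (p(J_N))_{1,1} = e₁ᵀ p(J_N) e₁, where p(J_N) denotes the evaluation of the polynomial p at the matrix J_N and e₁ is the first standard basis vector of ℝ^{N+1}. -/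
open MeasureTheory Polynomial Matrix

noncomputable def gqIv (v : ℝ → ℝ) (p : Polynomial ℝ) : ℝ := ∫ x : ℝ, p.eval x * v x

lemma gqIv_int (v : ℝ → ℝ) (hv_meas : Measurable v) (hv_nonneg : ∀ x, 0 ≤ v x)
    (hv_mom : ∀ n : ℕ, Integrable (fun x : ℝ => |x| ^ n * v x)) (p : Polynomial ℝ) :
    Integrable fun x : ℝ => p.eval x * v x := by
  have h1 : ∀ n : ℕ, Integrable fun x : ℝ => p.coeff n * (x ^ n * v x) := by
    intro n
    refine ((hv_mom n).mono' ((measurable_id.pow_const n).mul hv_meas).aestronglyMeasurable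
      ?_).const_mul _
    filter_upwards with x
    simp only [id_eq, Pi.mul_apply, Real.norm_eq_abs, abs_mul, abs_pow, abs_of_nonneg (hv_nonneg x), le_refl]
  have h2 : (fun x : ℝ => p.eval x * v x)
      = fun x => ∑ n ∈ Finset.range (p.natDegree + 1), p.coeff n * (x ^ n * v x) := by
    funext x
    rw [Polynomial.eval_eq_sum_range, Finset.sum_mul]
    exact Finset.sum_congr rfl fun n _ => by ring
  rw [h2]
  exact integrable_finset_sum _ fun n _ => h1 n

lemma gqIv_add (v : ℝ → ℝ) (hv_meas : Measurable v) (hv_nonneg : ∀ x, 0 ≤ v x)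
    (hv_mom : ∀ n : ℕ, Integrable (fun x : ℝ => |x| ^ n * v x)) (p q : Polynomial ℝ) :
    gqIv v (p + q) = gqIv v p + gqIv v q := by
  unfold gqIv
  simp only [eval_add, add_mul]
  exact integral_add (gqIv_int v hv_meas hv_nonneg hv_mom p) (gqIv_int v hv_meas hv_nonneg hv_mom q)

lemma gqIv_C (v : ℝ → ℝ) (c : ℝ) (p : Polynomial ℝ) :
    gqIv v (C c * p) = c * gqIv v p := by
  unfold gqIv
  simp only [eval_mul, eval_C, mul_assoc]
  exact integral_const_mul c _

lemma gqIv_sum (v : ℝ → ℝ) (hv_meas : Measurable v) (hv_nonneg : ∀ x, 0 ≤ v x)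
    (hv_mom : ∀ n : ℕ, Integrable (fun x : ℝ => |x| ^ n * v x))
    {ι : Type*} (s : Finset ι) (f : ι → Polynomial ℝ) :
    gqIv v (∑ j ∈ s, f j) = ∑ j ∈ s, gqIv v (f j) := by
  classical
  induction s using Finset.induction_on with
  | empty => simp [gqIv]
  | @insert a s ha ih =>
      rw [Finset.sum_insert ha, Finset.sum_insert ha,
        gqIv_add v hv_meas hv_nonneg hv_mom, ih]

/-- Gauss quadrature exactness via the Jacobi matrix: if `v` is a
probability density on ℝ with finite moments of all orders and infinite support,
with orthonormal polynomial basis `{H n}` and Jacobi matrix `J_N`, then for every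
polynomial `p` of degree at most `2N+1`,
`∫ p v = (p(J_N))_{1,1} = e₁ᵀ p(J_N) e₁`. -/
theorem gauss_quadrature_jacobi_matrix
    (N : ℕ)
    (v : ℝ → ℝ) (hv_meas : Measurable v) (hv_nonneg : ∀ x, 0 ≤ v x)
    (hv_prob : ∫ x : ℝ, v x = 1)
    (hv_mom : ∀ n : ℕ, Integrable (fun x : ℝ => |x| ^ n * v x))
    (hv_supp : {x : ℝ | v x ≠ 0}.Infinite)
    (H : ℕ → Polynomial ℝ)
    (hH0 : H 0 = 1) (hHdeg : ∀ n, (H n).natDegree = n)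
    (hHortho : ∀ m n, ∫ x : ℝ, (H m).eval x * (H n).eval x * v x
      = if m = n then 1 else 0)
    (a b : ℕ → ℝ)
    (hHrec0 : X * H 0 = C (b 1) * H 1 + C (a 0) * H 0)
    (hHrec : ∀ n, 1 ≤ n → X * H n
      = C (b (n + 1)) * H (n + 1) + C (a n) * H n + C (b n) * H (n - 1))
    (J : Matrix (Fin (N + 1)) (Fin (N + 1)) ℝ)
    (hJ : ∀ i j : Fin (N + 1), J i j =
      if (i : ℕ) = (j : ℕ) then a i
      else if (i : ℕ) + 1 = (j : ℕ) then b j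
      else if (j : ℕ) + 1 = (i : ℕ) then b i
      else 0) :
    ∀ p : Polynomial ℝ, p.natDegree ≤ 2 * N + 1 →
      (∫ x : ℝ, p.eval x * v x) = (Polynomial.aeval J p) 0 0 ∧
      (∫ x : ℝ, p.eval x * v x)
        = Pi.single 0 1 ⬝ᵥ (Polynomial.aeval J p).mulVec (Pi.single 0 1) := by
  classical
  have Iv_add : ∀ p q : Polynomial ℝ, gqIv v (p + q) = gqIv v p + gqIv v q :=
    gqIv_add v hv_meas hv_nonneg hv_mom
  have Iv_C : ∀ (c : ℝ) (p : Polynomial ℝ), gqIv v (C c * p) = c * gqIv v p := gqIv_C v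
  have Iv_sum : ∀ {ι : Type} (s : Finset ι) (f : ι → Polynomial ℝ),
      gqIv v (∑ j ∈ s, f j) = ∑ j ∈ s, gqIv v (f j) :=
    fun {ι} s f => gqIv_sum v hv_meas hv_nonneg hv_mom s f
  have hO : ∀ m n, gqIv v (H m * H n) = if m = n then 1 else 0 := by
    intro m n
    simpa only [gqIv, eval_mul] using hHortho m n
  have hHne : ∀ n, H n ≠ 0 := by
    intro n hn
    rcases n with _ | n
    · rw [hH0] at hn; exact one_ne_zero hn
    · have := hHdeg (n + 1)
      rw [hn, natDegree_zero] at this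
      exact (Nat.succ_ne_zero n) this.symm
  have hlc : ∀ n, (H n).coeff n ≠ 0 := by
    intro n
    have h := Polynomial.leadingCoeff_ne_zero.mpr (hHne n)
    rwa [Polynomial.leadingCoeff, hHdeg] at h
  -- orthogonality to higher-index H
  have L1 : ∀ k, ∀ p : Polynomial ℝ, p.natDegree ≤ k → ∀ m, k < m → gqIv v (p * H m) = 0 := by
    intro k
    induction k with
    | zero =>
      intro p hp m hm
      have hpC : p = C (p.coeff 0) := Polynomial.eq_C_of_natDegree_le_zero hp
      rw [hpC, Iv_C]
      have h0 : gqIv v (H m) = 0 := by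
        have h := hO 0 m
        rw [hH0, one_mul] at h
        rw [h, if_neg (by omega)]
      rw [h0, mul_zero]
    | succ k ih =>
      intro p hp m hm
      set c : ℝ := p.coeff (k + 1) / (H (k + 1)).coeff (k + 1) with hc
      set q : Polynomial ℝ := p - C c * H (k + 1) with hqdef
      have hqdeg : q.natDegree ≤ k := by
        apply Polynomial.natDegree_le_iff_coeff_eq_zero.mpr
        intro m' hm'
        have hqc : q.coeff m' = p.coeff m' - c * (H (k + 1)).coeff m' := by
          rw [hqdef, Polynomial.coeff_sub, Polynomial.coeff_C_mul]
        rcases eq_or_lt_of_le (Nat.succ_le_of_lt hm') with h | h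
        · rw [hqc, ← h, hc, div_mul_cancel₀ _ (hlc (k + 1)), sub_self]
        · rw [hqc, Polynomial.coeff_eq_zero_of_natDegree_lt (lt_of_le_of_lt hp h),
            Polynomial.coeff_eq_zero_of_natDegree_lt (by rw [hHdeg]; exact h),
            mul_zero, sub_zero]
      have hpq : p * H m = q * H m + C c * (H (k + 1) * H m) := by
        rw [hqdef]; ring
      rw [hpq, Iv_add, Iv_C, ih q hqdeg m (by omega), hO, if_neg (by omega), mul_zero, add_zero]
  -- expansion in the orthonormal basis
  have E : ∀ k, ∀ p : Polynomial ℝ, p.natDegree ≤ k →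
      p = ∑ j ∈ Finset.range (k + 1), C (gqIv v (p * H j)) * H j := by
    intro k
    induction k with
    | zero =>
      intro p hp
      have hpC : p = C (p.coeff 0) := Polynomial.eq_C_of_natDegree_le_zero hp
      have h1 : gqIv v (1 : Polynomial ℝ) = 1 := by
        simpa [gqIv] using hv_prob
      have h2 : gqIv v p = p.coeff 0 := by
        conv_lhs => rw [hpC, show (C (p.coeff 0) : Polynomial ℝ)
          = C (p.coeff 0) * 1 from (mul_one _).symm]
        rw [Iv_C, h1, mul_one]
      rw [Finset.sum_range_one, hH0, mul_one, mul_one, h2]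
      exact hpC
    | succ k ih =>
      intro p hp
      set c : ℝ := p.coeff (k + 1) / (H (k + 1)).coeff (k + 1) with hc
      set q : Polynomial ℝ := p - C c * H (k + 1) with hqdef
      have hqdeg : q.natDegree ≤ k := by
        apply Polynomial.natDegree_le_iff_coeff_eq_zero.mpr
        intro m' hm'
        have hqc : q.coeff m' = p.coeff m' - c * (H (k + 1)).coeff m' := by
          rw [hqdef, Polynomial.coeff_sub, Polynomial.coeff_C_mul]
        rcases eq_or_lt_of_le (Nat.succ_le_of_lt hm') with h | h
        · rw [hqc, ← h, hc, div_mul_cancel₀ _ (hlc (k + 1)), sub_self]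
        · rw [hqc, Polynomial.coeff_eq_zero_of_natDegree_lt (lt_of_le_of_lt hp h),
            Polynomial.coeff_eq_zero_of_natDegree_lt (by rw [hHdeg]; exact h),
            mul_zero, sub_zero]
      have hq1 : ∀ j, j ≤ k → gqIv v (q * H j) = gqIv v (p * H j) := by
        intro j hj
        have hpq : p * H j = q * H j + C c * (H (k + 1) * H j) := by rw [hqdef]; ring
        rw [hpq, Iv_add, Iv_C, hO, if_neg (by omega), mul_zero, add_zero]
      have hck : gqIv v (p * H (k + 1)) = c := by
        have hpq : p * H (k + 1) = q * H (k + 1) + C c * (H (k + 1) * H (k + 1)) := by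
          rw [hqdef]; ring
        rw [hpq, Iv_add, Iv_C, L1 k q hqdeg (k + 1) (by omega), hO, if_pos rfl,
          mul_one, zero_add]
      rw [Finset.sum_range_succ]
      calc p = q + C c * H (k + 1) := by rw [hqdef]; ring
        _ = (∑ j ∈ Finset.range (k + 1), C (gqIv v (q * H j)) * H j) + C c * H (k + 1) := by
              rw [← ih q hqdeg]
        _ = (∑ j ∈ Finset.range (k + 1), C (gqIv v (p * H j)) * H j)
              + C (gqIv v (p * H (k + 1))) * H (k + 1) := by
              rw [hck]
              congr 1
              refine Finset.sum_congr rfl fun j hj => ?_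
              rw [hq1 j (by simpa [Nat.lt_succ_iff] using Finset.mem_range.mp hj)]
  have hudeg : ∀ k n, k < n → gqIv v (X ^ k * H n) = 0 := by
    intro k n hkn
    exact L1 k (X ^ k) (by simp [Polynomial.natDegree_X_pow]) n hkn
  -- symmetric Jacobi matrix
  have hJsym : ∀ i j : Fin (N + 1), J i j = J j i := by
    intro i j
    rw [hJ, hJ]
    split_ifs <;>
      first
        | rfl
        | exact congrArg a (by omega)
        | exact congrArg b (by omega)
        | (exfalso; omega)
  -- tridiagonal action on a coefficient vector
  have hS : ∀ W : ℕ → ℝ, W (N + 1) = 0 → ∀ j : Fin (N + 1),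
      (∑ t : Fin (N + 1), J j t * W t)
        = b ((j : ℕ) + 1) * W ((j : ℕ) + 1) + a (j : ℕ) * W (j : ℕ)
          + (if 1 ≤ (j : ℕ) then b (j : ℕ) * W ((j : ℕ) - 1) else 0) := by
    intro W hW j
    have hsum : (∑ t : Fin (N + 1), J j t * W t)
        = ∑ t ∈ Finset.range (N + 1),
            ((if (j : ℕ) = t then a (j : ℕ) else if (j : ℕ) + 1 = t then b t
              else if t + 1 = (j : ℕ) then b (j : ℕ) else 0) * W t) := by
      rw [← Fin.sum_univ_eq_sum_range (fun t =>
        ((if (j : ℕ) = t then a (j : ℕ) else if (j : ℕ) + 1 = t then b t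
          else if t + 1 = (j : ℕ) then b (j : ℕ) else 0) * W t)) (N + 1)]
      exact Finset.sum_congr rfl fun t _ => by rw [hJ]
    rw [hsum]
    have hsplit : ∀ t ∈ Finset.range (N + 1),
        ((if (j : ℕ) = t then a (j : ℕ) else if (j : ℕ) + 1 = t then b t
          else if t + 1 = (j : ℕ) then b (j : ℕ) else 0) * W t)
        = (if t = (j : ℕ) then a (j : ℕ) * W (j : ℕ) else 0)
          + (if t = (j : ℕ) + 1 then b ((j : ℕ) + 1) * W ((j : ℕ) + 1) else 0)
          + (if t = (j : ℕ) - 1 then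
              (if 1 ≤ (j : ℕ) then b (j : ℕ) * W ((j : ℕ) - 1) else 0) else 0) := by
      intro t _
      rcases eq_or_ne t (j : ℕ) with rfl | h1
      · rw [if_pos rfl, if_pos rfl, if_neg (show ¬((j:ℕ) = (j:ℕ) + 1) by omega)]
        by_cases h0 : 1 ≤ (j : ℕ)
        · rw [if_neg (show ¬((j:ℕ) = (j:ℕ) - 1) by omega)]; ring
        · rw [if_neg (show ¬(1 ≤ (j:ℕ)) from h0)]
          by_cases ht : (j:ℕ) = (j:ℕ) - 1
          · rw [if_pos ht]; ring
          · rw [if_neg ht]; ring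
      · rw [if_neg fun h => h1 h.symm, if_neg h1]
        rcases eq_or_ne t ((j : ℕ) + 1) with rfl | h2
        · rw [if_pos rfl, if_pos rfl,
            if_neg (show ¬((j:ℕ)+1 = (j:ℕ)-1) by omega)]
          ring
        · rw [if_neg fun h => h2 h.symm, if_neg h2]
          by_cases h3 : t + 1 = (j : ℕ)
          · rw [if_pos h3, if_pos (show t = (j : ℕ) - 1 by omega),
              if_pos (show 1 ≤ (j : ℕ) by omega)]
            have ht : t = (j : ℕ) - 1 := by omega
            rw [ht]; ring
          · rw [if_neg h3, if_neg (show ¬(t = (j : ℕ) - 1) by omega)]; ring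
    rw [Finset.sum_congr rfl hsplit, Finset.sum_add_distrib, Finset.sum_add_distrib,
      Finset.sum_ite_eq' (Finset.range (N + 1)) ((j : ℕ)),
      Finset.sum_ite_eq' (Finset.range (N + 1)) ((j : ℕ) + 1),
      Finset.sum_ite_eq' (Finset.range (N + 1)) ((j : ℕ) - 1),
      if_pos (Finset.mem_range.mpr j.isLt),
      if_pos (Finset.mem_range.mpr (by omega : (j : ℕ) - 1 < N + 1))]
    by_cases hjN : (j : ℕ) + 1 < N + 1
    · rw [if_pos (Finset.mem_range.mpr hjN)]; ring
    · have hjN' : (j : ℕ) + 1 = N + 1 := by have := j.isLt; omega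
      rw [if_neg (by simp [Finset.mem_range]; omega), hjN', hW, mul_zero]
      ring
  -- the vector J^k e₀ contains the coefficients of x^k
  have M1 : ∀ k, k ≤ N → ∀ j : Fin (N + 1), (J ^ k) j 0 = gqIv v (X ^ k * H (j : ℕ)) := by
    intro k
    induction k with
    | zero =>
      intro _ j
      rw [pow_zero, Matrix.one_apply, pow_zero, one_mul]
      have h := hO 0 (j : ℕ)
      rw [hH0, one_mul] at h
      rw [h]
      by_cases hj : j = (0 : Fin (N + 1))
      · rw [if_pos hj, if_pos (by rw [hj]; rfl)]
      · rw [if_neg hj, if_neg (by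
          intro hc
          exact hj (Fin.ext (by simpa using hc.symm)))]
    | succ k ih =>
      intro hk j
      have hkN : k ≤ N := Nat.le_of_succ_le hk
      rw [pow_succ', Matrix.mul_apply]
      rw [show (∑ t : Fin (N + 1), J j t * (J ^ k) t 0)
          = ∑ t : Fin (N + 1), J j t * gqIv v (X ^ k * H (t : ℕ)) from
        Finset.sum_congr rfl fun t _ => by rw [ih hkN t]]
      rw [hS (fun n => gqIv v (X ^ k * H n)) (hudeg k (N + 1) (by omega)) j]
      rcases Nat.eq_zero_or_pos (j : ℕ) with h0 | h1
      · rw [h0]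
        rw [show (X : Polynomial ℝ) ^ (k + 1) * H 0 = X ^ k * (X * H 0) from by ring, hHrec0]
        rw [show (X : Polynomial ℝ) ^ k * (C (b 1) * H 1 + C (a 0) * H 0)
            = C (b 1) * (X ^ k * H 1) + C (a 0) * (X ^ k * H 0) from by ring]
        rw [Iv_add, Iv_C, Iv_C, if_neg (show ¬(1 ≤ (0:ℕ)) by omega)]
        ring
      · rw [show (X : Polynomial ℝ) ^ (k + 1) * H (j : ℕ) = X ^ k * (X * H (j : ℕ)) from by ring,
          hHrec (j : ℕ) h1]
        rw [show (X : Polynomial ℝ) ^ k * (C (b ((j:ℕ) + 1)) * H ((j:ℕ) + 1)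
              + C (a (j:ℕ)) * H (j:ℕ) + C (b (j:ℕ)) * H ((j:ℕ) - 1))
            = C (b ((j:ℕ) + 1)) * (X ^ k * H ((j:ℕ) + 1))
              + C (a (j:ℕ)) * (X ^ k * H (j:ℕ))
              + C (b (j:ℕ)) * (X ^ k * H ((j:ℕ) - 1)) from by ring]
        rw [Iv_add, Iv_add, Iv_C, Iv_C, Iv_C, if_pos (show 1 ≤ (j:ℕ) from h1)]
  -- entries ∫ x H_i H_j v equal the Jacobi matrix
  have Tlem : ∀ i j : Fin (N + 1), gqIv v (H (i : ℕ) * (X * H (j : ℕ))) = J i j := by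
    intro i j
    rw [hJ]
    rcases Nat.eq_zero_or_pos (j : ℕ) with h0 | h1
    · rw [h0, hHrec0]
      rw [show H (i : ℕ) * (C (b 1) * H 1 + C (a 0) * H 0)
          = C (b 1) * (H (i : ℕ) * H 1) + C (a 0) * (H (i : ℕ) * H 0) from by ring]
      rw [Iv_add, Iv_C, Iv_C, hO, hO]
      rw [Nat.zero_add]
      split_ifs
      all_goals try (exfalso; omega)
      all_goals try exact (False.elim ‹False›)
      all_goals try ring
      all_goals rename_i hlast
      all_goals try linear_combination congrArg a hlast
      all_goals try linear_combination (congrArg a hlast).symm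
      all_goals try linear_combination congrArg b hlast
      all_goals try linear_combination (congrArg b hlast).symm
    · rw [hHrec (j : ℕ) h1]
      rw [show H (i : ℕ) * (C (b ((j:ℕ) + 1)) * H ((j:ℕ) + 1)
            + C (a (j:ℕ)) * H (j:ℕ) + C (b (j:ℕ)) * H ((j:ℕ) - 1))
          = C (b ((j:ℕ) + 1)) * (H (i:ℕ) * H ((j:ℕ) + 1))
            + C (a (j:ℕ)) * (H (i:ℕ) * H (j:ℕ))
            + C (b (j:ℕ)) * (H (i:ℕ) * H ((j:ℕ) - 1)) from by ring]
      rw [Iv_add, Iv_add, Iv_C, Iv_C, Iv_C, hO, hO, hO]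
      by_cases hij : (i : ℕ) = (j : ℕ)
      · rw [if_pos hij, if_pos hij, if_neg (show ¬((i:ℕ) = (j:ℕ)+1) by omega),
          if_neg (show ¬((i:ℕ) = (j:ℕ)-1) by omega), hij]
        ring
      · rw [if_neg hij, if_neg hij]
        by_cases h2 : (i : ℕ) + 1 = (j : ℕ)
        · rw [if_pos h2, if_neg (show ¬((i:ℕ) = (j:ℕ)+1) by omega),
            if_pos (show (i:ℕ) = (j:ℕ)-1 by omega)]
          ring
        · rw [if_neg h2]
          by_cases h3 : (j : ℕ) + 1 = (i : ℕ)
          · rw [if_pos h3, if_pos (show (i:ℕ) = (j:ℕ)+1 by omega),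
              if_neg (show ¬((i:ℕ) = (j:ℕ)-1) by omega), ← h3]
            ring
          · rw [if_neg h3, if_neg (show ¬((i:ℕ) = (j:ℕ)+1) by omega),
              if_neg (show ¬((i:ℕ) = (j:ℕ)-1) by omega)]
            ring
  -- expansion of monomials over Fin-indexed sums
  have EX : ∀ k, k ≤ N → (X : Polynomial ℝ) ^ k
      = ∑ i : Fin (N + 1), C (gqIv v (X ^ k * H (i : ℕ))) * H (i : ℕ) := by
    intro k hk
    rw [Fin.sum_univ_eq_sum_range (fun i => C (gqIv v (X ^ k * H i)) * H i) (N + 1)]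
    exact E N (X ^ k) (by simpa [Polynomial.natDegree_X_pow] using hk)
  have hsymP : ∀ (k : ℕ) (i : Fin (N + 1)), (J ^ k) 0 i = (J ^ k) i 0 := by
    intro k i
    have hT : Jᵀ = J := by
      ext i' j'
      exact hJsym j' i'
    calc (J ^ k) 0 i = (J ^ k)ᵀ i 0 := rfl
      _ = (Jᵀ ^ k) i 0 := by rw [Matrix.transpose_pow]
      _ = (J ^ k) i 0 := by rw [hT]
  -- exactness for monomials
  have key : ∀ m, m ≤ 2 * N + 1 → gqIv v (X ^ m) = (J ^ m) 0 0 := by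
    intro m hm
    by_cases hm' : m = 2 * N + 1
    · subst hm'
      have e1 : (X : Polynomial ℝ) ^ (2 * N + 1)
          = ∑ i : Fin (N + 1), ∑ j : Fin (N + 1),
              C (gqIv v (X ^ N * H (i : ℕ)))
                * (C (gqIv v (X ^ N * H (j : ℕ))) * (H (i : ℕ) * (X * H (j : ℕ)))) := by
        conv_lhs => rw [show (X : Polynomial ℝ) ^ (2 * N + 1) = X ^ N * (X * X ^ N) from by
          ring]
        conv_lhs => rw [EX N le_rfl]
        rw [Finset.mul_sum, Finset.sum_mul_sum]
        refine Finset.sum_congr rfl fun i _ => Finset.sum_congr rfl fun j _ => by ring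
      have e2 : gqIv v (X ^ (2 * N + 1))
          = ∑ i : Fin (N + 1), ∑ j : Fin (N + 1),
              gqIv v (X ^ N * H (i : ℕ)) * (gqIv v (X ^ N * H (j : ℕ)) * J i j) := by
        rw [e1, Iv_sum]
        refine Finset.sum_congr rfl fun i _ => ?_
        rw [Iv_sum]
        refine Finset.sum_congr rfl fun j _ => ?_
        rw [Iv_C, Iv_C, Tlem i j]
      have e3 : (J ^ (2 * N + 1)) 0 0
          = ∑ i : Fin (N + 1), ∑ j : Fin (N + 1),
              gqIv v (X ^ N * H (i : ℕ)) * (gqIv v (X ^ N * H (j : ℕ)) * J i j) := by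
        rw [show 2 * N + 1 = N + 1 + N from by omega, pow_add, pow_succ]
        simp only [Matrix.mul_apply, Finset.sum_mul]
        rw [Finset.sum_comm]
        refine Finset.sum_congr rfl fun i _ => Finset.sum_congr rfl fun j _ => ?_
        rw [hsymP N i, M1 N le_rfl i, M1 N le_rfl j]
        ring
      rw [e2, e3]
    · have hm2 : m ≤ 2 * N := by omega
      set k := min m N with hk
      set l := m - k with hl
      have hkN : k ≤ N := min_le_right _ _
      have hlN : l ≤ N := by omega
      have hkl : k + l = m := by omega
      have e1 : (X : Polynomial ℝ) ^ m
          = ∑ i : Fin (N + 1), C (gqIv v (X ^ k * H (i : ℕ))) * (H (i : ℕ) * X ^ l) := by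
        conv_lhs => rw [← hkl, pow_add]
        conv_lhs => rw [EX k hkN]
        rw [Finset.sum_mul]
        exact Finset.sum_congr rfl fun i _ => by ring
      have e2 : gqIv v (X ^ m)
          = ∑ i : Fin (N + 1), gqIv v (X ^ k * H (i : ℕ)) * gqIv v (X ^ l * H (i : ℕ)) := by
        rw [e1, Iv_sum]
        refine Finset.sum_congr rfl fun i _ => ?_
        rw [mul_comm (H ((i : ℕ))) (X ^ l), Iv_C]
      have e3 : (J ^ m) 0 0
          = ∑ i : Fin (N + 1), gqIv v (X ^ k * H (i : ℕ)) * gqIv v (X ^ l * H (i : ℕ)) := by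
        rw [← hkl, pow_add, Matrix.mul_apply]
        refine Finset.sum_congr rfl fun i _ => ?_
        rw [hsymP k i, M1 k hkN i, M1 l hlN i]
      rw [e2, e3]
  -- assemble
  intro p hp
  have hrep : p = ∑ m ∈ Finset.range (p.natDegree + 1), C (p.coeff m) * X ^ m := by
    conv_lhs => rw [p.as_sum_range' (p.natDegree + 1) (Nat.lt_succ_self _)]
    exact Finset.sum_congr rfl fun m _ => (Polynomial.C_mul_X_pow_eq_monomial).symm
  have goal1 : gqIv v p = (Polynomial.aeval J p) 0 0 := by
    conv_lhs => rw [hrep]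
    conv_rhs => rw [hrep]
    rw [Iv_sum, map_sum, Matrix.sum_apply]
    refine Finset.sum_congr rfl fun m hm => ?_
    have hm' : m ≤ 2 * N + 1 :=
      le_trans (Nat.lt_succ_iff.mp (Finset.mem_range.mp hm)) hp
    rw [Iv_C, key m hm', _root_.map_mul, _root_.map_pow, aeval_X, aeval_C]
    rw [show (algebraMap ℝ (Matrix (Fin (N + 1)) (Fin (N + 1)) ℝ) (p.coeff m)) * J ^ m
        = p.coeff m • (J ^ m) from (Algebra.smul_def _ _).symm]
    rw [Matrix.smul_apply, smul_eq_mul]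
  have hvec : ∀ M : Matrix (Fin (N + 1)) (Fin (N + 1)) ℝ,
      (Pi.single (0 : Fin (N + 1)) (1 : ℝ)) ⬝ᵥ M.mulVec (Pi.single 0 1) = M 0 0 := by
    intro M
    simp [Matrix.mulVec, dotProduct, Pi.single_apply]
  exact ⟨goal1, goal1.trans (hvec _).symm⟩
end

section
/- Let w = Σ_{k=1}^K c_k v_k be a mixture density on ℝ whose components v_k have finite moments of all orders, infinite support, and Jacobi matrices J_N^k ∈ ℝ^{(N+1)×(N+1)}. Let h_0, h_1, …, h_N be the monic orthogonal polynomials of w (deg h_n = n, leading coefficient 1, ⟨h_m, h_n⟩_w = 0 for m ≠ n). Then for every n ≤ N: ⟨h_n, h_n⟩_w = Σ_{k=1}^K c_k (h_n(J_N^k) e₁)ᵀ (h_n(J_N^k) e₁) and ⟨x h_n, h_n⟩_w = Σ_{k=1}^K c_k (h_n(J_N^k) e₁)ᵀ J_N^k (h_n(J_N^k) e₁), where h_n(J_N^k) is the matrix polynomial evaluation and e₁ is the first standard basis vector of ℝ^{N+1}. -/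
open MeasureTheory Polynomial Matrix

lemma myInteg (v : ℝ → ℝ) (hv_meas : Measurable v) (hv_nonneg : ∀ x, 0 ≤ v x)
    (hv_mom : ∀ n : ℕ, Integrable (fun x : ℝ => |x| ^ n * v x))
    (p : Polynomial ℝ) : Integrable (fun x : ℝ => p.eval x * v x) := by
  have hg : Integrable (fun x : ℝ => ∑ i ∈ Finset.range (p.natDegree + 1),
      |p.coeff i| * (|x| ^ i * v x)) := by
    apply integrable_finset_sum
    intro i _
    exact (hv_mom i).const_mul _
  refine hg.mono' ?_ ?_
  · exact (p.continuous.measurable.mul hv_meas).aestronglyMeasurable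
  · filter_upwards with x
    have h1 : |p.eval x| ≤ ∑ i ∈ Finset.range (p.natDegree + 1), |p.coeff i| * |x| ^ i := by
      rw [Polynomial.eval_eq_sum_range]
      refine (Finset.abs_sum_le_sum_abs _ _).trans ?_
      refine Finset.sum_le_sum fun i _ => ?_
      rw [abs_mul, abs_pow]
    calc ‖p.eval x * v x‖ = |p.eval x| * v x := by
          rw [Real.norm_eq_abs, abs_mul, abs_of_nonneg (hv_nonneg x)]
      _ ≤ (∑ i ∈ Finset.range (p.natDegree + 1), |p.coeff i| * |x| ^ i) * v x :=
          mul_le_mul_of_nonneg_right h1 (hv_nonneg x)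
      _ = _ := by rw [Finset.sum_mul]; exact Finset.sum_congr rfl (fun i _ => by ring)

lemma myRep (H : ℕ → Polynomial ℝ) (hH0 : H 0 = 1) (hHdeg : ∀ n, (H n).natDegree = n) :
    ∀ m (p : Polynomial ℝ), p.natDegree ≤ m →
      ∃ d : ℕ → ℝ, p = ∑ i ∈ Finset.range (m + 1), C (d i) * H i := by
  intro m
  induction m with
  | zero =>
    intro p hp
    exact ⟨fun _ => p.coeff 0, by simp [hH0, ← p.eq_C_of_natDegree_le_zero hp]⟩
  | succ m ih =>
    intro p hp
    have hne : H (m + 1) ≠ 0 := by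
      intro h0
      have := hHdeg (m + 1)
      rw [h0] at this
      simp at this
    have hlc : (H (m + 1)).leadingCoeff ≠ 0 := leadingCoeff_ne_zero.mpr hne
    set r : ℝ := p.coeff (m + 1) / (H (m + 1)).leadingCoeff with hr
    set q : Polynomial ℝ := p - C r * H (m + 1) with hq
    have hqdeg : q.natDegree ≤ m := by
      rw [Polynomial.natDegree_le_iff_coeff_eq_zero]
      intro j hj
      rcases eq_or_lt_of_le (Nat.succ_le_of_lt hj) with hj' | hj'
      · -- j = m+1
        have hcoeff : (H (m + 1)).coeff (m + 1) = (H (m + 1)).leadingCoeff := by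
          rw [Polynomial.leadingCoeff, hHdeg]
        simp only [hq, Polynomial.coeff_sub, Polynomial.coeff_C_mul, ← hj', hcoeff, hr]
        rw [div_mul_cancel₀ _ hlc]; ring
      · have h1 : p.coeff j = 0 := Polynomial.coeff_eq_zero_of_natDegree_lt (lt_of_le_of_lt hp hj')
        have h2 : (H (m + 1)).coeff j = 0 :=
          Polynomial.coeff_eq_zero_of_natDegree_lt (by rw [hHdeg]; exact hj')
        simp [hq, h1, h2]
    obtain ⟨d', hd'⟩ := ih q hqdeg
    refine ⟨Function.update d' (m + 1) r, ?_⟩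
    rw [Finset.sum_range_succ]
    have : ∀ i ∈ Finset.range (m + 1), C (Function.update d' (m + 1) r i) * H i = C (d' i) * H i := by
      intro i hi
      have hi' := Finset.mem_range.mp hi
      rw [Function.update_of_ne (by omega : i ≠ m + 1)]
    rw [Finset.sum_congr rfl this, ← hd', Function.update_self, hq]
    ring

lemma myBne (H : ℕ → Polynomial ℝ) (hH0 : H 0 = 1) (hHdeg : ∀ n, (H n).natDegree = n)
    (a b : ℕ → ℝ)
    (hrec0 : X * H 0 = C (b 1) * H 1 + C (a 0) * H 0)
    (hrec : ∀ n, 1 ≤ n → X * H n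
      = C (b (n + 1)) * H (n + 1) + C (a n) * H n + C (b n) * H (n - 1)) :
    ∀ n, b (n + 1) ≠ 0 := by
  have hne : ∀ n, H n ≠ 0 := by
    intro n h0
    rcases Nat.eq_zero_or_pos n with rfl | hn
    · rw [hH0] at h0; exact one_ne_zero h0
    · have := hHdeg n; rw [h0] at this; simp at this; omega
  intro n
  have hlead : ∀ m, (H m).coeff m ≠ 0 := by
    intro m
    have : (H m).coeff m = (H m).leadingCoeff := by rw [Polynomial.leadingCoeff, hHdeg]
    rw [this]
    exact leadingCoeff_ne_zero.mpr (hne m)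
  have hhigh : ∀ m j, m < j → (H m).coeff j = 0 := fun m j hj =>
    Polynomial.coeff_eq_zero_of_natDegree_lt (by rw [hHdeg]; exact hj)
  rcases Nat.eq_zero_or_pos n with rfl | hn
  · have := congrArg (fun p => Polynomial.coeff p 1) hrec0
    simp only [Polynomial.coeff_X_mul, Polynomial.coeff_add, Polynomial.coeff_C_mul] at this
    rw [hhigh 0 1 (by omega)] at this
    intro hb
    rw [hb] at this
    simp at this
    exact hlead 0 this
  · have := congrArg (fun p => Polynomial.coeff p (n + 1)) (hrec n hn)
    simp only [Polynomial.coeff_X_mul, Polynomial.coeff_add, Polynomial.coeff_C_mul] at this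
    rw [hhigh n (n + 1) (by omega), hhigh (n - 1) (n + 1) (by omega)] at this
    intro hb
    rw [hb] at this
    simp at this
    exact hlead n this

lemma myVec (N : ℕ) (H : ℕ → Polynomial ℝ) (hH0 : H 0 = 1)
    (a b : ℕ → ℝ)
    (hrec0 : X * H 0 = C (b 1) * H 1 + C (a 0) * H 0)
    (hrec : ∀ n, 1 ≤ n → X * H n
      = C (b (n + 1)) * H (n + 1) + C (a n) * H n + C (b n) * H (n - 1))
    (hb : ∀ n, b (n + 1) ≠ 0)
    (J : Matrix (Fin (N + 1)) (Fin (N + 1)) ℝ)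
    (hJ : ∀ i j : Fin (N + 1), J i j =
      if (i : ℕ) = (j : ℕ) then a i
      else if (i : ℕ) + 1 = (j : ℕ) then b j
      else if (j : ℕ) + 1 = (i : ℕ) then b i
      else 0) :
    ∀ i : ℕ, ∀ hi : i ≤ N,
      (Polynomial.aeval J (H i)).mulVec (Pi.single 0 1)
        = Pi.single (⟨i, Nat.lt_succ_of_le hi⟩ : Fin (N + 1)) 1 := by
  have hcol : ∀ (i : Fin (N + 1)), J.mulVec (Pi.single i 1) = fun j => J j i := by
    intro i; ext j; simp [Matrix.mulVec, dotProduct, Pi.single_apply]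
  have hcv : ∀ (i : ℕ) (hi1 : i + 1 ≤ N),
      (fun j => J j ⟨i, by omega⟩)
        = b (i + 1) • (Pi.single (⟨i + 1, by omega⟩ : Fin (N + 1)) 1 : Fin (N + 1) → ℝ)
          + a i • (Pi.single (⟨i, by omega⟩ : Fin (N + 1)) 1 : Fin (N + 1) → ℝ)
          + (if i = 0 then 0 else b i) •
              (Pi.single (⟨i - 1, by omega⟩ : Fin (N + 1)) 1 : Fin (N + 1) → ℝ) := by
    intro i hi1
    ext j
    have hjlt := j.isLt
    simp only [hJ, Pi.add_apply, Pi.smul_apply, Pi.single_apply, smul_eq_mul, Fin.ext_iff,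
      Fin.val_mk]
    by_cases hA : (j : ℕ) = i
    · rw [if_pos hA, if_pos hA, if_neg (by omega : ¬ (j:ℕ) = i + 1), hA]
      by_cases h0 : i = 0
      · rw [if_pos h0]; ring
      · rw [if_neg h0, if_neg (by omega : ¬ i = i - 1)]; ring
    · rw [if_neg hA, if_neg hA]
      by_cases hB : i + 1 = (j : ℕ)
      · rw [if_neg (by omega : ¬ (j:ℕ) + 1 = i), if_pos hB, if_pos (by omega : (j:ℕ) = i + 1),
          ← hB]
        by_cases h0 : i = 0
        · rw [if_pos h0]; ring
        · rw [if_neg h0, if_neg (by omega : ¬ i + 1 = i - 1)]; ring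
      · rw [if_neg (by omega : ¬ (j:ℕ) = i + 1)]
        by_cases hC : (j : ℕ) + 1 = i
        · rw [if_pos hC, if_neg (by omega : ¬ i = 0), if_pos (by omega : (j:ℕ) = i - 1)]; ring
        · rw [if_neg hC, if_neg hB, if_neg (by omega : ¬ (j:ℕ) = i - 1)]
          by_cases h0 : i = 0
          · rw [if_pos h0]; ring
          · rw [if_neg h0]; ring
  intro i
  induction i using Nat.strong_induction_on with
  | _ i ih =>
    match i with
    | 0 =>
      intro hi
      rw [hH0, _root_.map_one, Matrix.one_mulVec]
      congr 1
    | 1 =>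
      intro hi
      have e := congrArg (fun p => (Polynomial.aeval J p).mulVec
        (Pi.single (0 : Fin (N + 1)) 1)) hrec0
      simp only [_root_.map_mul, Polynomial.aeval_X, hH0, _root_.map_one, mul_one,
        _root_.map_add, Polynomial.aeval_C, Algebra.algebraMap_eq_smul_one, smul_one_mul,
        Matrix.add_mulVec, Matrix.smul_mulVec, Matrix.one_mulVec] at e
      have h0 : (0 : Fin (N + 1)) = ⟨0, by omega⟩ := rfl
      rw [h0, hcol ⟨0, by omega⟩, hcv 0 (by omega)] at e
      simp only [reduceIte, zero_smul, add_zero] at e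
      have e2 := add_right_cancel e
      have e3 := smul_right_injective (Fin (N + 1) → ℝ) (hb 0) e2
      exact e3.symm
    | (m + 2) =>
      intro hi
      have e := congrArg (fun p => (Polynomial.aeval J p).mulVec
        (Pi.single (0 : Fin (N + 1)) 1)) (hrec (m + 1) (by omega))
      simp only [_root_.map_mul, Polynomial.aeval_X, _root_.map_add,
        Polynomial.aeval_C, Algebra.algebraMap_eq_smul_one, smul_one_mul, Matrix.add_mulVec,
        Matrix.smul_mulVec, Matrix.one_mulVec, Nat.add_sub_cancel] at e
      rw [← Matrix.mulVec_mulVec, ih (m + 1) (by omega) (by omega),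
        ih m (by omega) (by omega)] at e
      rw [hcol ⟨m + 1, Nat.lt_succ_of_le (by omega)⟩, hcv (m + 1) (by omega),
        if_neg (by omega : ¬ m + 1 = 0)] at e
      simp only [Nat.add_sub_cancel] at e
      have e2 := add_right_cancel (add_right_cancel e)
      exact (smul_right_injective (Fin (N + 1) → ℝ) (hb (m + 1)) e2).symm

lemma mySumMulVec {ι : Type*} (n : ℕ) (s : Finset ι) (f : ι → Matrix (Fin n) (Fin n) ℝ)
    (u : Fin n → ℝ) : (∑ i ∈ s, f i).mulVec u = ∑ i ∈ s, (f i).mulVec u := by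
  ext j
  simp only [Matrix.mulVec, dotProduct, Finset.sum_apply, Matrix.sum_apply, Finset.sum_mul]
  rw [Finset.sum_comm]


-- integrability of (poly) * v  (copy of myInteg, assumed available)
-- here we develop the moment identity
lemma myMom (v : ℝ → ℝ) (N : ℕ) (hv_meas : Measurable v) (hv_nonneg : ∀ x, 0 ≤ v x)
    (hv_mom : ∀ n : ℕ, Integrable (fun x : ℝ => |x| ^ n * v x))
    (hInteg : ∀ p : Polynomial ℝ, Integrable (fun x : ℝ => p.eval x * v x))
    (H : ℕ → Polynomial ℝ)
    (hortho : ∀ m n, ∫ x : ℝ, (H m).eval x * (H n).eval x * v x = if m = n then 1 else 0)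
    (a b : ℕ → ℝ)
    (hrec0 : X * H 0 = C (b 1) * H 1 + C (a 0) * H 0)
    (hrec : ∀ n, 1 ≤ n → X * H n
      = C (b (n + 1)) * H (n + 1) + C (a n) * H n + C (b n) * H (n - 1))
    (J : Matrix (Fin (N + 1)) (Fin (N + 1)) ℝ)
    (hJ : ∀ i j : Fin (N + 1), J i j =
      if (i : ℕ) = (j : ℕ) then a i
      else if (i : ℕ) + 1 = (j : ℕ) then b j
      else if (j : ℕ) + 1 = (i : ℕ) then b i
      else 0) :
    ∀ i j : Fin (N + 1),
      ∫ x : ℝ, (x * (H (i : ℕ)).eval x) * (H (j : ℕ)).eval x * v x = J i j := by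
  have hic : ∀ (q r : Polynomial ℝ) (cst : ℝ),
      Integrable (fun x : ℝ => cst * (q.eval x * r.eval x * v x)) := by
    intro q r cst
    have := (hInteg (q * r)).const_mul cst
    simpa only [Polynomial.eval_mul, mul_assoc] using this
  intro i j
  have hiv := i.isLt
  have hjv := j.isLt
  rcases Nat.eq_zero_or_pos (i : ℕ) with hz | hpos
  · -- i = 0 case
    have hpt : ∀ x : ℝ, (x * (H (i:ℕ)).eval x) * (H (j:ℕ)).eval x * v x
        = b 1 * ((H 1).eval x * (H (j:ℕ)).eval x * v x)
          + a 0 * ((H 0).eval x * (H (j:ℕ)).eval x * v x) := by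
      intro x
      have : (x * (H (i:ℕ)).eval x) = (X * H 0).eval x := by
        rw [hz]; simp
      rw [this, hrec0]
      simp only [Polynomial.eval_add, Polynomial.eval_mul, Polynomial.eval_C]
      ring
    rw [integral_congr_ae (Filter.Eventually.of_forall hpt), integral_add (hic _ _ _) (hic _ _ _),
      integral_const_mul, integral_const_mul, hortho, hortho, hJ]
    split_ifs <;> first
      | (exfalso; omega)
      | (simp_all; try ring)
      | (rename_i hh1 hh2; rw [hz]; omega)
      | ring
  · -- i ≥ 1
    have hpt : ∀ x : ℝ, (x * (H (i:ℕ)).eval x) * (H (j:ℕ)).eval x * v x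
        = b ((i:ℕ) + 1) * ((H ((i:ℕ) + 1)).eval x * (H (j:ℕ)).eval x * v x)
          + a (i:ℕ) * ((H (i:ℕ)).eval x * (H (j:ℕ)).eval x * v x)
          + b (i:ℕ) * ((H ((i:ℕ) - 1)).eval x * (H (j:ℕ)).eval x * v x) := by
      intro x
      have : (x * (H (i:ℕ)).eval x) = (X * H (i:ℕ)).eval x := by simp
      rw [this, hrec (i:ℕ) hpos]
      simp only [Polynomial.eval_add, Polynomial.eval_mul, Polynomial.eval_C]
      ring
    have hadd : Integrable (fun x : ℝ =>
        b ((i:ℕ) + 1) * ((H ((i:ℕ) + 1)).eval x * (H (j:ℕ)).eval x * v x)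
          + a (i:ℕ) * ((H (i:ℕ)).eval x * (H (j:ℕ)).eval x * v x)) :=
      (hic _ _ _).add (hic _ _ _)
    rw [integral_congr_ae (Filter.Eventually.of_forall hpt),
      integral_add hadd (hic _ _ _),
      integral_add (hic _ _ _) (hic _ _ _),
      integral_const_mul, integral_const_mul, integral_const_mul, hortho, hortho, hortho, hJ]
    split_ifs <;> first
      | (exfalso; omega)
      | (simp_all; try ring)
      | ring

lemma myComp (N : ℕ) (v : ℝ → ℝ) (hv_meas : Measurable v) (hv_nonneg : ∀ x, 0 ≤ v x)
    (hv_mom : ∀ n : ℕ, Integrable (fun x : ℝ => |x| ^ n * v x))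
    (H : ℕ → Polynomial ℝ) (hH0 : H 0 = 1) (hHdeg : ∀ n, (H n).natDegree = n)
    (hortho : ∀ m n, ∫ x : ℝ, (H m).eval x * (H n).eval x * v x = if m = n then 1 else 0)
    (a b : ℕ → ℝ)
    (hrec0 : X * H 0 = C (b 1) * H 1 + C (a 0) * H 0)
    (hrec : ∀ n, 1 ≤ n → X * H n
      = C (b (n + 1)) * H (n + 1) + C (a n) * H n + C (b n) * H (n - 1))
    (J : Matrix (Fin (N + 1)) (Fin (N + 1)) ℝ)
    (hJ : ∀ i j : Fin (N + 1), J i j =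
      if (i : ℕ) = (j : ℕ) then a i
      else if (i : ℕ) + 1 = (j : ℕ) then b j
      else if (j : ℕ) + 1 = (i : ℕ) then b i
      else 0)
    (p : Polynomial ℝ) (hp : p.natDegree ≤ N) :
    (∫ x : ℝ, p.eval x * p.eval x * v x)
      = (Polynomial.aeval J p).mulVec (Pi.single 0 1)
          ⬝ᵥ (Polynomial.aeval J p).mulVec (Pi.single 0 1)
    ∧ (∫ x : ℝ, (x * p.eval x) * p.eval x * v x)
      = (Polynomial.aeval J p).mulVec (Pi.single 0 1)
          ⬝ᵥ J.mulVec ((Polynomial.aeval J p).mulVec (Pi.single 0 1)) := by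
  have hInteg := myInteg v hv_meas hv_nonneg hv_mom
  have hic : ∀ (q r : Polynomial ℝ) (cst : ℝ),
      Integrable (fun x : ℝ => cst * (q.eval x * r.eval x * v x)) := by
    intro q r cst
    have := (hInteg (q * r)).const_mul cst
    simpa only [Polynomial.eval_mul, mul_assoc] using this
  have hicx : ∀ (q r : Polynomial ℝ) (cst : ℝ),
      Integrable (fun x : ℝ => cst * ((x * q.eval x) * r.eval x * v x)) := by
    intro q r cst
    have := (hInteg (X * q * r)).const_mul cst
    simpa only [Polynomial.eval_mul, Polynomial.eval_X, mul_assoc] using this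
  have hb := myBne H hH0 hHdeg a b hrec0 hrec
  obtain ⟨d, hd⟩ := myRep H hH0 hHdeg N p hp
  have hd' : p = ∑ i : Fin (N + 1), C (d (i : ℕ)) * H (i : ℕ) := by
    rw [hd, ← Fin.sum_univ_eq_sum_range (fun i => C (d i) * H i) (N + 1)]
  have hA : (Polynomial.aeval J p).mulVec (Pi.single 0 1)
      = fun j : Fin (N + 1) => d (j : ℕ) := by
    calc (Polynomial.aeval J p).mulVec (Pi.single 0 1)
        = ∑ i : Fin (N + 1), d (i : ℕ) • (Polynomial.aeval J (H (i : ℕ))).mulVec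
            (Pi.single 0 1) := by
          rw [hd', map_sum, mySumMulVec]
          refine Finset.sum_congr rfl fun i _ => ?_
          rw [← Polynomial.smul_eq_C_mul, _root_.map_smul, Matrix.smul_mulVec]
      _ = ∑ i : Fin (N + 1), d (i : ℕ) • (Pi.single i 1 : Fin (N + 1) → ℝ) := by
          refine Finset.sum_congr rfl fun i _ => ?_
          rw [myVec N H hH0 a b hrec0 hrec hb J hJ (i : ℕ) (Nat.lt_succ_iff.mp i.isLt),
            Fin.eta]
      _ = fun j : Fin (N + 1) => d (j : ℕ) := by
          funext j
          simp [Finset.sum_apply, Pi.single_apply]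
  have hpt1 : ∀ x : ℝ, p.eval x * p.eval x * v x
      = ∑ i : Fin (N + 1), ∑ j : Fin (N + 1),
          (d (i : ℕ) * d (j : ℕ)) * ((H (i : ℕ)).eval x * (H (j : ℕ)).eval x * v x) := by
    intro x
    rw [hd', Polynomial.eval_finset_sum]
    simp only [Polynomial.eval_mul, Polynomial.eval_C]
    rw [Finset.sum_mul_sum, Finset.sum_mul]
    refine Finset.sum_congr rfl fun i _ => ?_
    rw [Finset.sum_mul]
    refine Finset.sum_congr rfl fun j _ => ?_
    ring
  have e1 : (∫ x : ℝ, p.eval x * p.eval x * v x)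
      = ∑ i : Fin (N + 1), ∑ j : Fin (N + 1),
          (d (i : ℕ) * d (j : ℕ)) * (if (i : ℕ) = (j : ℕ) then (1:ℝ) else 0) := by
    rw [integral_congr_ae (Filter.Eventually.of_forall hpt1),
      integral_finset_sum _ (fun i _ => integrable_finset_sum _ (fun j _ => hic _ _ _))]
    refine Finset.sum_congr rfl fun i _ => ?_
    rw [integral_finset_sum _ (fun j _ => hic _ _ _)]
    refine Finset.sum_congr rfl fun j _ => ?_
    rw [integral_const_mul, hortho]
  have hmom := myMom v N hv_meas hv_nonneg hv_mom hInteg H hortho a b hrec0 hrec J hJ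
  have hpt2 : ∀ x : ℝ, (x * p.eval x) * p.eval x * v x
      = ∑ i : Fin (N + 1), ∑ j : Fin (N + 1),
          (d (i : ℕ) * d (j : ℕ)) * ((x * (H (i : ℕ)).eval x) * (H (j : ℕ)).eval x * v x) := by
    intro x
    calc (x * p.eval x) * p.eval x * v x = x * (p.eval x * p.eval x * v x) := by ring
      _ = x * ∑ i : Fin (N + 1), ∑ j : Fin (N + 1),
            (d (i : ℕ) * d (j : ℕ)) * ((H (i : ℕ)).eval x * (H (j : ℕ)).eval x * v x) := by
          rw [hpt1 x]
      _ = _ := by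
          rw [Finset.mul_sum]
          refine Finset.sum_congr rfl fun i _ => ?_
          rw [Finset.mul_sum]
          refine Finset.sum_congr rfl fun j _ => ?_
          ring
  have e2 : (∫ x : ℝ, (x * p.eval x) * p.eval x * v x)
      = ∑ i : Fin (N + 1), ∑ j : Fin (N + 1), (d (i : ℕ) * d (j : ℕ)) * J i j := by
    rw [integral_congr_ae (Filter.Eventually.of_forall hpt2),
      integral_finset_sum _ (fun i _ => integrable_finset_sum _ (fun j _ => hicx _ _ _))]
    refine Finset.sum_congr rfl fun i _ => ?_
    rw [integral_finset_sum _ (fun j _ => hicx _ _ _)]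
    refine Finset.sum_congr rfl fun j _ => ?_
    rw [integral_const_mul, hmom i j]
  constructor
  · rw [e1, hA]
    simp only [Fin.val_eq_val, mul_ite, mul_one, mul_zero, Finset.sum_ite_eq,
      Finset.mem_univ, if_true, dotProduct]
  · rw [e2, hA]
    simp only [dotProduct, Matrix.mulVec]
    refine Finset.sum_congr rfl fun i _ => ?_
    rw [Finset.mul_sum]
    refine Finset.sum_congr rfl fun j _ => ?_
    ring


/-- For a mixture density `w = ∑ c_k v_k` whose components have
finite moments, infinite support, and Jacobi matrices `J^k`, and for the monic
orthogonal polynomials `h_0, …, h_N` of `w`, one has for every `n ≤ N`: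
`⟨h_n, h_n⟩_w = ∑_k c_k (h_n(J^k) e₁)ᵀ (h_n(J^k) e₁)` and
`⟨x h_n, h_n⟩_w = ∑_k c_k (h_n(J^k) e₁)ᵀ J^k (h_n(J^k) e₁)`. -/
theorem mixture_monic_inner_products_via_jacobi
    (K N : ℕ) (hK : 0 < K)
    (c : Fin K → ℝ) (hc_pos : ∀ k, 0 < c k) (hc_sum : ∑ k, c k = 1)
    (v : Fin K → ℝ → ℝ) (hv_meas : ∀ k, Measurable (v k))
    (hv_nonneg : ∀ k x, 0 ≤ v k x) (hv_prob : ∀ k, ∫ x : ℝ, v k x = 1)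
    (hv_mom : ∀ k (n : ℕ), Integrable (fun x : ℝ => |x| ^ n * v k x))
    (hv_supp : ∀ k, {x : ℝ | v k x ≠ 0}.Infinite)
    (w : ℝ → ℝ) (hw : ∀ x, w x = ∑ k, c k * v k x)
    -- orthonormal polynomial bases of the components, with their recurrences
    (Hk : Fin K → ℕ → Polynomial ℝ)
    (hHk0 : ∀ k, Hk k 0 = 1)
    (hHkdeg : ∀ k n, (Hk k n).natDegree = n)
    (hHkortho : ∀ k m n, ∫ x : ℝ, (Hk k m).eval x * (Hk k n).eval x * v k x
      = if m = n then 1 else 0)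
    (ak bk : Fin K → ℕ → ℝ)
    (hHkrec0 : ∀ k, X * Hk k 0 = C (bk k 1) * Hk k 1 + C (ak k 0) * Hk k 0)
    (hHkrec : ∀ k n, 1 ≤ n → X * Hk k n
      = C (bk k (n + 1)) * Hk k (n + 1) + C (ak k n) * Hk k n
        + C (bk k n) * Hk k (n - 1))
    -- the Jacobi matrices of the components
    (J : Fin K → Matrix (Fin (N + 1)) (Fin (N + 1)) ℝ)
    (hJ : ∀ k (i j : Fin (N + 1)), J k i j =
      if (i : ℕ) = (j : ℕ) then ak k i
      else if (i : ℕ) + 1 = (j : ℕ) then bk k j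
      else if (j : ℕ) + 1 = (i : ℕ) then bk k i
      else 0)
    -- the monic orthogonal polynomials of the mixture
    (h : ℕ → Polynomial ℝ)
    (hmonic : ∀ n, n ≤ N → (h n).Monic)
    (hdeg : ∀ n, n ≤ N → (h n).natDegree = n)
    (hortho : ∀ m n, m ≤ N → n ≤ N → m ≠ n →
      ∫ x : ℝ, (h m).eval x * (h n).eval x * w x = 0) :
    ∀ n, n ≤ N →
      (∫ x : ℝ, (h n).eval x * (h n).eval x * w x)
        = ∑ k, c k * ((Polynomial.aeval (J k) (h n)).mulVec (Pi.single 0 1)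
            ⬝ᵥ (Polynomial.aeval (J k) (h n)).mulVec (Pi.single 0 1)) ∧
      (∫ x : ℝ, (x * (h n).eval x) * (h n).eval x * w x)
        = ∑ k, c k * ((Polynomial.aeval (J k) (h n)).mulVec (Pi.single 0 1)
            ⬝ᵥ (J k).mulVec
              ((Polynomial.aeval (J k) (h n)).mulVec (Pi.single 0 1))) := by
  intro n hn
  have hp : (h n).natDegree ≤ N := le_of_eq_of_le (hdeg n hn) hn
  have comp := fun k => myComp N (v k) (hv_meas k) (hv_nonneg k) (hv_mom k)
    (Hk k) (hHk0 k) (hHkdeg k) (hHkortho k) (ak k) (bk k) (hHkrec0 k)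
    (fun m hm => hHkrec k m hm) (J k) (hJ k) (h n) hp
  have hick : ∀ k : Fin K, Integrable
      (fun x : ℝ => c k * ((h n).eval x * (h n).eval x * v k x)) := by
    intro k
    have := ((myInteg (v k) (hv_meas k) (hv_nonneg k) (hv_mom k)) (h n * h n)).const_mul (c k)
    simpa only [Polynomial.eval_mul, mul_assoc] using this
  have hickx : ∀ k : Fin K, Integrable
      (fun x : ℝ => c k * ((x * (h n).eval x) * (h n).eval x * v k x)) := by
    intro k
    have := ((myInteg (v k) (hv_meas k) (hv_nonneg k) (hv_mom k)) (X * h n * h n)).const_mul (c k)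
    simpa only [Polynomial.eval_mul, Polynomial.eval_X, mul_assoc] using this
  constructor
  · have hpt : ∀ x : ℝ, (h n).eval x * (h n).eval x * w x
        = ∑ k, c k * ((h n).eval x * (h n).eval x * v k x) := by
      intro x
      rw [hw x, Finset.mul_sum]
      exact Finset.sum_congr rfl fun k _ => by ring
    rw [integral_congr_ae (Filter.Eventually.of_forall hpt),
      integral_finset_sum _ (fun k _ => hick k)]
    refine Finset.sum_congr rfl fun k _ => ?_
    rw [integral_const_mul, (comp k).1]
  · have hpt : ∀ x : ℝ, (x * (h n).eval x) * (h n).eval x * w x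
        = ∑ k, c k * ((x * (h n).eval x) * (h n).eval x * v k x) := by
      intro x
      rw [hw x, Finset.mul_sum]
      exact Finset.sum_congr rfl fun k _ => by ring
    rw [integral_congr_ae (Filter.Eventually.of_forall hpt),
      integral_finset_sum _ (fun k _ => hickx k)]
    refine Finset.sum_congr rfl fun k _ => ?_
    rw [integral_const_mul, (comp k).2]
end

section
/- Let w = Σ_{k=1}^K c_k v_k be a mixture density, with orthonormal polynomial basis {H_n} for w and orthonormal polynomial bases {H_n^k} for each component v_k. For a fixed N, write H_N(x) = Σ_{n=0}^N q_{N,n}^k H_n^k(x) for each k (which is possible since both families span the polynomials of degree at most N). Then for every function f with ∫_ℝ |f(x) H_N(x)| v_k(x) dx < ∞ for all k, the payoff coefficient f_N = ⟨f, H_N⟩_w satisfies f_N = Σ_{k=1}^K Σ_{n=0}^N c_k q_{N,n}^k f_n^k, where f_n^k = ⟨f, H_n^k⟩_{v_k}. -/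
open MeasureTheory Polynomial

/-- For a mixture density `w = ∑ c_k v_k` with orthonormal
polynomial basis `{H n}` and component bases `{H_n^k}`, writing
`H_N = ∑_{n=0}^N q_{N,n}^k H_n^k`, the payoff coefficient
`f_N = ⟨f, H_N⟩_w` satisfies `f_N = ∑_k ∑_{n=0}^N c_k q_{N,n}^k f_n^k`,
where `f_n^k = ⟨f, H_n^k⟩_{v_k}` (all the inner products being well defined). -/
theorem mixture_payoff_coefficients
    (K N : ℕ) (hK : 0 < K)
    (c : Fin K → ℝ) (hc_pos : ∀ k, 0 < c k) (hc_sum : ∑ k, c k = 1)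
    (v : Fin K → ℝ → ℝ) (hv_meas : ∀ k, Measurable (v k))
    (hv_nonneg : ∀ k x, 0 ≤ v k x) (hv_prob : ∀ k, ∫ x : ℝ, v k x = 1)
    (hv_mom : ∀ k (n : ℕ), Integrable (fun x : ℝ => |x| ^ n * v k x))
    (w : ℝ → ℝ) (hw : ∀ x, w x = ∑ k, c k * v k x)
    -- orthonormal polynomial bases of the components
    (Hk : Fin K → ℕ → Polynomial ℝ)
    (hHk0 : ∀ k, Hk k 0 = 1)
    (hHkdeg : ∀ k n, (Hk k n).natDegree = n)
    (hHkortho : ∀ k m n, ∫ x : ℝ, (Hk k m).eval x * (Hk k n).eval x * v k x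
      = if m = n then 1 else 0)
    -- orthonormal polynomial basis of the mixture
    (H : ℕ → Polynomial ℝ)
    (hH0 : H 0 = 1) (hHdeg : ∀ n, (H n).natDegree = n)
    (hHortho : ∀ m n, ∫ x : ℝ, (H m).eval x * (H n).eval x * w x
      = if m = n then 1 else 0)
    -- the representation of `H N` in each component basis
    (q : Fin K → ℕ → ℝ)
    (hq : ∀ k, H N = ∑ n ∈ Finset.range (N + 1), C (q k n) * Hk k n)
    -- the payoff function
    (f : ℝ → ℝ)
    (hfint : ∀ k, Integrable (fun x => f x * (H N).eval x * v k x))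
    (hfintk : ∀ k n, n ≤ N → Integrable (fun x => f x * (Hk k n).eval x * v k x)) :
    (∫ x : ℝ, f x * (H N).eval x * w x)
      = ∑ k, ∑ n ∈ Finset.range (N + 1),
          c k * q k n * ∫ x : ℝ, f x * (Hk k n).eval x * v k x := by
  have step1 : (∫ x : ℝ, f x * (H N).eval x * w x)
      = ∑ k, c k * ∫ x : ℝ, f x * (H N).eval x * v k x := by
    have : (∫ x : ℝ, f x * (H N).eval x * w x)
        = ∫ x : ℝ, ∑ k, c k * (f x * (H N).eval x * v k x) := by
      congr 1; ext x
      rw [hw x, Finset.mul_sum]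
      exact Finset.sum_congr rfl (fun k _ => by ring)
    rw [this, integral_finset_sum _ (fun k _ => (hfint k).const_mul (c k))]
    simp [MeasureTheory.integral_const_mul]
  rw [step1]
  refine Finset.sum_congr rfl (fun k _ => ?_)
  have step2 : (∫ x : ℝ, f x * (H N).eval x * v k x)
      = ∑ n ∈ Finset.range (N + 1), q k n * ∫ x : ℝ, f x * (Hk k n).eval x * v k x := by
    have : (∫ x : ℝ, f x * (H N).eval x * v k x)
        = ∫ x : ℝ, ∑ n ∈ Finset.range (N + 1), q k n * (f x * (Hk k n).eval x * v k x) := by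
      congr 1; ext x
      rw [hq k]
      simp only [eval_finset_sum, eval_mul, eval_C, Finset.mul_sum, Finset.sum_mul]
      exact Finset.sum_congr rfl (fun n _ => by ring)
    rw [this, integral_finset_sum _ (fun n hn =>
      (hfintk k n (Nat.lt_succ_iff.mp (Finset.mem_range.mp hn))).const_mul (q k n))]
    simp [MeasureTheory.integral_const_mul]
  rw [step2, Finset.mul_sum]
  exact Finset.sum_congr rfl (fun n _ => by ring)
end

section
/- Let v be the Gamma density on (ξ,∞) with shape α ≥ 1 and rate β > 1, and let H_n(x) = √(n!/Γ(α+n)) · L_n^{α−1}(β(x−ξ)) be its orthonormal polynomial basis, where L_n^{α−1} are the generalized Laguerre polynomials. Let f(x) = e^{−rT}(e^x − e^{k̄})^+ be the discounted payoff of a call option with log strike k̄ ∈ ℝ, interest rate r ∈ ℝ and maturity T > 0. Then the payoff coefficients f_n = ∫_ℝ f(x) H_n(x) v(x) dx are given by f_n = e^{−rT} √(n!/Γ(α+n)) · (1/Γ(α)) · ( e^{ξ} I_n^{α−1}(μ; β^{−1}) − e^{k̄} I_n^{α−1}(μ; 0) ), where μ = max(0, β(k̄ − ξ)) and I_n^{α−1}(μ;ν)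 = ∫_μ^∞ e^{νx} L_n^{α−1}(x) x^{α−1} e^{−x} dx. -/
open MeasureTheory Set Polynomial


lemma integrable_poly_rpow_exp (p : Polynomial ℝ) {s c : ℝ} (hs : 0 ≤ s) (hc : 0 < c) :
    MeasureTheory.IntegrableOn (fun x : ℝ => p.eval x * x ^ s * Real.exp (-(c * x))) (Ioi 0) := by
  induction p using Polynomial.induction_on' with
  | add p q hp hq =>
      refine MeasureTheory.IntegrableOn.congr_fun (hp.add hq) (fun x _ => ?_) measurableSet_Ioi
      simp [add_mul]
  | monomial k a =>
      have hsk : (-1:ℝ) < s + k := by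
        have : (0:ℝ) ≤ (k:ℝ) := Nat.cast_nonneg k
        linarith
      have h1 : MeasureTheory.IntegrableOn
          (fun x : ℝ => x ^ (s + k) * Real.exp (-c * x ^ (1:ℝ))) (Ioi 0) :=
        integrableOn_rpow_mul_exp_neg_mul_rpow hsk one_pos hc
      refine MeasureTheory.IntegrableOn.congr_fun (h1.const_mul a) (fun x hx => ?_)
        measurableSet_Ioi
      have hx0 : (0:ℝ) < x := hx
      simp only [eval_monomial, Real.rpow_one]
      rw [Real.rpow_add hx0, Real.rpow_natCast]
      ring_nf

/-- The generalized Laguerre polynomials `L_n^{(a)}`: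
`L_0^{(a)} = 1`, `L_1^{(a)} = 1 + a − X`, and
`(n+1) L_{n+1}^{(a)} = (2n + 1 + a − X) L_n^{(a)} − (n + a) L_{n−1}^{(a)}`;
in particular `L_1^{(α−1)} = α − X`. -/
noncomputable def genLaguerre (a : ℝ) : ℕ → Polynomial ℝ
  | 0 => 1
  | 1 => C (1 + a) - X
  | n + 2 => (((n : ℝ) + 2)⁻¹) •
      ((C (2 * ((n : ℝ) + 1) + 1 + a) - X) * genLaguerre a (n + 1)
        - C (((n : ℝ) + 1) + a) * genLaguerre a n)

/-- Payoff coefficients of a call option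
`f(x) = e^{−rT}(e^x − e^{k̄})⁺` under the Gamma density on `(ξ,∞)` with shape
`α ≥ 1` and rate `β > 1`, with orthonormal basis
`H_n(x) = √(n!/Γ(α+n)) L_n^{α−1}(β(x−ξ))`:
`f_n = e^{−rT} √(n!/Γ(α+n)) (1/Γ(α)) (e^{ξ} I_n^{α−1}(μ;β⁻¹) − e^{k̄} I_n^{α−1}(μ;0))`
with `μ = max(0, β(k̄−ξ))`. -/
theorem gamma_call_payoff_coefficients
    (α β ξ r T kbar : ℝ) (hα : 1 ≤ α) (hβ : 1 < β) (hT : 0 < T)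
    (v : ℝ → ℝ)
    (hv : ∀ x, v x = if ξ < x then
      β ^ α / Real.Gamma α * (x - ξ) ^ (α - 1) * Real.exp (-(β * (x - ξ)))
      else 0)
    (H : ℕ → ℝ → ℝ)
    (hH : ∀ n x, H n x = Real.sqrt ((n.factorial : ℝ) / Real.Gamma (α + n))
      * (genLaguerre (α - 1) n).eval (β * (x - ξ)))
    (f : ℝ → ℝ)
    (hf : ∀ x, f x = Real.exp (-(r * T)) * max (Real.exp x - Real.exp kbar) 0)
    (μ : ℝ) (hμ : μ = max 0 (β * (kbar - ξ)))
    (I : ℕ → ℝ → ℝ)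
    (hI : ∀ (n : ℕ) (ν : ℝ), I n ν
      = ∫ x in Ioi μ, Real.exp (ν * x) * (genLaguerre (α - 1) n).eval x
          * x ^ (α - 1) * Real.exp (-x)) :
    ∀ n : ℕ,
      (∫ x : ℝ, f x * H n x * v x)
        = Real.exp (-(r * T)) * Real.sqrt ((n.factorial : ℝ) / Real.Gamma (α + n))
          * (1 / Real.Gamma α)
          * (Real.exp ξ * I n β⁻¹ - Real.exp kbar * I n 0) := by
  intro n
  have hβ0 : (0:ℝ) < β := lt_trans one_pos hβ
  have hβne : β ≠ 0 := ne_of_gt hβ0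
  have hs : (0:ℝ) ≤ α - 1 := by linarith
  have hμ0 : (0:ℝ) ≤ μ := by rw [hμ]; exact le_max_left _ _
  set L := genLaguerre (α - 1) n with hL
  set cst := Real.sqrt ((n.factorial : ℝ) / Real.Gamma (α + n)) with hcst
  set g : ℝ → ℝ := fun u =>
    max (Real.exp ξ * Real.exp (β⁻¹ * u) - Real.exp kbar) 0
      * L.eval u * u ^ (α - 1) * Real.exp (-u) with hg
  -- Step A: reduce to an integral of g over Ioi 0
  have stepA : (∫ x : ℝ, f x * H n x * v x)
      = (Real.exp (-(r * T)) * cst * (β / Real.Gamma α))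
        * ∫ x : ℝ, (Ioi (0:ℝ)).indicator g (β * (x - ξ)) := by
    rw [← integral_const_mul]
    congr 1
    funext x
    by_cases hx : ξ < x
    · have hu : 0 < β * (x - ξ) := by
        apply mul_pos hβ0; linarith
      rw [indicator_of_mem (mem_Ioi.2 hu)]
      rw [hf, hH, hv, if_pos hx, hg]
      have hexp : Real.exp ξ * Real.exp (β⁻¹ * (β * (x - ξ))) = Real.exp x := by
        rw [← Real.exp_add]
        congr 1
        field_simp
        ring
      have hrpow : (β * (x - ξ)) ^ (α - 1) = β ^ (α - 1) * (x - ξ) ^ (α - 1) :=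
        Real.mul_rpow hβ0.le (by linarith)
      have hba : β ^ α = β ^ (α - 1) * β := by
        rw [← Real.rpow_add_one hβne]; ring_nf
      simp only [hg]
      rw [hexp, hrpow, hba]
      ring
    · have hu : β * (x - ξ) ≤ 0 := by
        apply mul_nonpos_of_nonneg_of_nonpos hβ0.le; linarith
      rw [indicator_of_notMem (by simpa using not_lt.2 hu)]
      rw [hv, if_neg hx]
      ring
  -- Step A2: change of variables
  have stepA2 : (∫ x : ℝ, (Ioi (0:ℝ)).indicator g (β * (x - ξ)))
      = β⁻¹ * ∫ u in Ioi (0:ℝ), g u := by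
    have h1 : (∫ x : ℝ, (Ioi (0:ℝ)).indicator g (β * (x - ξ)))
        = ∫ x : ℝ, (Ioi (0:ℝ)).indicator g (β * x) :=
      integral_sub_right_eq_self (fun y => (Ioi (0:ℝ)).indicator g (β * y)) ξ
    rw [h1, Measure.integral_comp_mul_left ((Ioi (0:ℝ)).indicator g) β,
      integral_indicator measurableSet_Ioi, abs_of_pos (inv_pos.2 hβ0), smul_eq_mul]
  -- Step B: restrict to Ioi μ
  have stepB : (∫ u in Ioi (0:ℝ), g u) = ∫ u in Ioi μ, g u := by
    refine setIntegral_eq_of_subset_of_ae_diff_eq_zero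
      measurableSet_Ioi.nullMeasurableSet (Ioi_subset_Ioi hμ0)
      (Filter.Eventually.of_forall fun x hx => ?_)
    obtain ⟨hx0, hxμ⟩ := hx
    have hx0' : (0:ℝ) < x := hx0
    have hxle : x ≤ μ := not_lt.1 hxμ
    have hxk : x ≤ β * (kbar - ξ) := by
      rcases max_cases 0 (β * (kbar - ξ)) with ⟨h1, h2⟩ | ⟨h1, h2⟩
      · rw [hμ, h1] at hxle; linarith
      · rw [hμ, h1] at hxle; exact hxle
    have hkey : Real.exp ξ * Real.exp (β⁻¹ * x) ≤ Real.exp kbar := by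
      rw [← Real.exp_add]
      apply Real.exp_le_exp.2
      have : β⁻¹ * x ≤ kbar - ξ := by
        rw [inv_mul_le_iff₀ hβ0]; linarith [hxk]
      linarith
    rw [hg]
    simp only
    rw [max_eq_right (by linarith)]
    ring
  -- Integrability
  have intA : IntegrableOn (fun u : ℝ =>
      Real.exp (β⁻¹ * u) * L.eval u * u ^ (α - 1) * Real.exp (-u)) (Ioi μ) := by
    have hc : (0:ℝ) < 1 - β⁻¹ := by
      have : β⁻¹ < 1 := inv_lt_one_of_one_lt₀ hβ
      linarith
    have h0 : IntegrableOn (fun u : ℝ =>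
        L.eval u * u ^ (α - 1) * Real.exp (-((1 - β⁻¹) * u))) (Ioi 0) :=
      integrable_poly_rpow_exp L hs hc
    have h1 := h0.mono_set (Ioi_subset_Ioi hμ0)
    refine IntegrableOn.congr_fun h1 (fun x _ => ?_) measurableSet_Ioi
    rw [show Real.exp (β⁻¹ * x) * L.eval x * x ^ (α - 1) * Real.exp (-x)
        = L.eval x * x ^ (α - 1) * (Real.exp (β⁻¹ * x) * Real.exp (-x)) by ring,
      ← Real.exp_add]
    congr 2
    ring
  have intB : IntegrableOn (fun u : ℝ =>
      Real.exp ((0:ℝ) * u) * L.eval u * u ^ (α - 1) * Real.exp (-u)) (Ioi μ) := by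
    have h0 : IntegrableOn (fun u : ℝ =>
        L.eval u * u ^ (α - 1) * Real.exp (-((1:ℝ) * u))) (Ioi 0) :=
      integrable_poly_rpow_exp L hs one_pos
    have h1 := h0.mono_set (Ioi_subset_Ioi hμ0)
    refine IntegrableOn.congr_fun h1 (fun x _ => ?_) measurableSet_Ioi
    simp [one_mul]
  -- Step C
  have stepC : (∫ u in Ioi μ, g u)
      = Real.exp ξ * I n β⁻¹ - Real.exp kbar * I n 0 := by
    rw [hI, hI]
    have hcongr : ∀ x ∈ Ioi μ, g x
        = Real.exp ξ * (Real.exp (β⁻¹ * x) * L.eval x * x ^ (α - 1) * Real.exp (-x))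
          - Real.exp kbar * (Real.exp ((0:ℝ) * x) * L.eval x * x ^ (α - 1) * Real.exp (-x)) := by
      intro x hx
      have hxμ : μ < x := hx
      have hxk : β * (kbar - ξ) < x := lt_of_le_of_lt (by rw [hμ]; exact le_max_right _ _) hxμ
      have hkey : Real.exp kbar ≤ Real.exp ξ * Real.exp (β⁻¹ * x) := by
        rw [← Real.exp_add]
        apply Real.exp_le_exp.2
        have : kbar - ξ ≤ β⁻¹ * x := by
          rw [le_inv_mul_iff₀ hβ0]; linarith
        linarith
      rw [hg]
      simp only
      rw [max_eq_left (by linarith), zero_mul, Real.exp_zero]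
      ring
    rw [setIntegral_congr_fun measurableSet_Ioi hcongr,
      integral_sub (intA.const_mul _) (intB.const_mul _),
      integral_const_mul, integral_const_mul]
  rw [stepA, stepA2, stepB, stepC]
  field_simp
end

section
/- Let v be the Gamma density on (ξ,∞) with shape α ≥ 1 and rate β > 0, with orthonormal polynomial basis H_n(x) = √(n!/Γ(α+n)) · L_n^{α−1}(β(x−ξ)). Let f(x) = e^{−rT}(x − k̄)^+ for a strike k̄ ≥ ξ, interest rate r ∈ ℝ and maturity T > 0. Write x·H_n(x+ξ) + (ξ − k̄)·H_n(x+ξ) = Σ_{j=0}^{n+1} p_{n,1+j} x^j (expansion in the monomial basis). Then the payoff coefficients f_n = ∫_ℝ f(x) H_n(x) v(x) dx satisfy f_n = e^{−rT} Σ_{j=0}^{n+1} p_{n,1+j} · Γ(α+j, β(k̄−ξ)) / (Γ(α) β^{j}) for every n ≥ 0. -/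
open MeasureTheory Set Polynomial

lemma indicator_shift (F : ℝ → ℝ) (a d : ℝ) :
    (Ioi a).indicator (fun u => F (u - d)) = fun u => (Ioi (a - d)).indicator F (u - d) := by
  funext u
  by_cases hu : a < u
  · rw [Set.indicator_of_mem (mem_Ioi.mpr hu),
      Set.indicator_of_mem (mem_Ioi.mpr (by simpa using sub_lt_sub_right hu d))]
  · rw [Set.indicator_of_notMem (by simpa using hu),
      Set.indicator_of_notMem (by simp only [mem_Ioi, not_lt]; linarith [not_lt.mp hu])]

lemma integral_Ioi_sub (F : ℝ → ℝ) (a d : ℝ) :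
    (∫ u in Ioi a, F (u - d)) = ∫ u in Ioi (a - d), F u := by
  rw [← integral_indicator measurableSet_Ioi, ← integral_indicator measurableSet_Ioi,
    indicator_shift]
  exact integral_sub_right_eq_self ((Ioi (a - d)).indicator F) d

lemma integrableOn_Ioi_sub_iff (F : ℝ → ℝ) (a d : ℝ) :
    IntegrableOn (fun u => F (u - d)) (Ioi a) ↔ IntegrableOn F (Ioi (a - d)) := by
  rw [← integrable_indicator_iff (measurableSet_Ioi : MeasurableSet (Ioi a)),
    ← integrable_indicator_iff (measurableSet_Ioi : MeasurableSet (Ioi (a - d))), indicator_shift]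
  simpa [Function.comp_def] using
    ((measurePreserving_sub_right volume d).integrable_comp_emb
      (MeasurableEquiv.subRight d).measurableEmbedding (g := (Ioi (a - d)).indicator F))

/-- Payoff coefficients of the payoff `f(x) = e^{−rT}(x − k̄)⁺`
under the Gamma density on `(ξ,∞)` with shape `α ≥ 1` and rate `β > 0`, with
orthonormal basis `H_n(x) = √(n!/Γ(α+n)) L_n^{α−1}(β(x−ξ))`: writing
`x·H_n(x+ξ) + (ξ−k̄)·H_n(x+ξ) = ∑_{j=0}^{n+1} p_{n,1+j} x^j`, one has
`f_n = e^{−rT} ∑_{j=0}^{n+1} p_{n,1+j} Γ(α+j, β(k̄−ξ)) / (Γ(α) β^j)`,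
where `Γ(a,z) = ∫_z^∞ x^{a−1} e^{−x} dx`. -/
theorem gamma_linear_call_payoff_coefficients
    (α β ξ r T kbar : ℝ) (hα : 1 ≤ α) (hβ : 0 < β) (hT : 0 < T)
    (hk : ξ ≤ kbar)
    (v : ℝ → ℝ)
    (hv : ∀ x, v x = if ξ < x then
      β ^ α / Real.Gamma α * (x - ξ) ^ (α - 1) * Real.exp (-(β * (x - ξ)))
      else 0)
    (H : ℕ → ℝ → ℝ)
    (hH : ∀ n x, H n x = Real.sqrt ((n.factorial : ℝ) / Real.Gamma (α + n))
      * (genLaguerre (α - 1) n).eval (β * (x - ξ)))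
    (f : ℝ → ℝ)
    (hf : ∀ x, f x = Real.exp (-(r * T)) * max (x - kbar) 0)
    (p : (n : ℕ) → Fin (n + 2) → ℝ)
    (hp : ∀ (n : ℕ) (x : ℝ),
      x * H n (x + ξ) + (ξ - kbar) * H n (x + ξ)
        = ∑ j : Fin (n + 2), p n j * x ^ (j : ℕ)) :
    ∀ n : ℕ,
      (∫ x : ℝ, f x * H n x * v x)
        = Real.exp (-(r * T)) * ∑ j : Fin (n + 2),
            p n j * (∫ x in Ioi (β * (kbar - ξ)),
                x ^ (α + ((j : ℕ) : ℝ) - 1) * Real.exp (-x))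
              / (Real.Gamma α * β ^ (j : ℕ)) := by
  intro n
  have hΓ : 0 < Real.Gamma α := Real.Gamma_pos_of_pos (by linarith)
  set e : ℝ := Real.exp (-(r * T)) with he
  set c : ℝ := β * (kbar - ξ) with hc
  have hc0 : 0 ≤ c := mul_nonneg hβ.le (by linarith)
  -- the per-j data
  set g : Fin (n + 2) → ℝ → ℝ := fun j x => (x - ξ) ^ (j : ℕ) * v x with hg
  -- pointwise identity for the integrand
  have key : (fun x => f x * H n x * v x)
      = (Ioi kbar).indicator (fun x => e * ∑ j : Fin (n + 2), p n j * g j x) := by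
    funext x
    by_cases hx : kbar < x
    · rw [Set.indicator_of_mem (mem_Ioi.mpr hx)]
      have hmax : max (x - kbar) 0 = x - kbar := max_eq_left (by linarith)
      have hpx := hp n (x - ξ)
      rw [sub_add_cancel] at hpx
      have hxk : (x - kbar) * H n x = ∑ j : Fin (n + 2), p n j * (x - ξ) ^ (j : ℕ) := by
        rw [← hpx]; ring
      rw [hf x, hmax]
      calc e * (x - kbar) * H n x * v x
          = e * ((x - kbar) * H n x) * v x := by ring
        _ = e * (∑ j : Fin (n + 2), p n j * (x - ξ) ^ (j : ℕ)) * v x := by rw [hxk]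
        _ = e * ∑ j : Fin (n + 2), p n j * g j x := by
            rw [mul_assoc, Finset.sum_mul]
            congr 1
            refine Finset.sum_congr rfl fun j _ => ?_
            simp only [hg]; ring
    · rw [Set.indicator_of_notMem (by simpa using hx)]
      rw [hf x, max_eq_right (by linarith [not_lt.mp hx])]
      ring
  rw [key, integral_indicator measurableSet_Ioi]
  -- per-j computation
  have hsj : ∀ j : Fin (n + 2), (0:ℝ) < α + (j : ℕ) := fun j => by
    have : (0:ℝ) ≤ (j : ℕ) := Nat.cast_nonneg _
    linarith
  set h : Fin (n + 2) → ℝ → ℝ :=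
    fun j u => u ^ (α + ((j : ℕ) : ℝ) - 1) * Real.exp (-u) with hh
  have hint : ∀ j : Fin (n + 2), IntegrableOn (h j) (Ioi c) := by
    intro j
    have := (Real.GammaIntegral_convergent (hsj j)).mono_set
      (Ioi_subset_Ioi hc0)
    exact this.congr_fun (fun u _ => by simp [hh, mul_comm]) measurableSet_Ioi
  set D : Fin (n + 2) → ℝ :=
    fun j => β ^ α / Real.Gamma α * (β ^ (α + ((j : ℕ) : ℝ) - 1))⁻¹ with hD
  have heq : ∀ j : Fin (n + 2), EqOn (g j)
      (fun x => D j * h j (β * x - β * ξ)) (Ioi kbar) := by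
    intro j x hx
    have hx' : kbar < x := hx
    have hxi : 0 < x - ξ := by linarith
    have hβs : (0:ℝ) < β ^ (α + ((j : ℕ) : ℝ) - 1) := Real.rpow_pos_of_pos hβ _
    simp only [hg, hD, hh]
    rw [hv x, if_pos (by linarith : ξ < x)]
    have h1 : β * x - β * ξ = β * (x - ξ) := by ring
    rw [h1]
    have h2 : (β * (x - ξ)) ^ (α + ((j : ℕ) : ℝ) - 1)
        = β ^ (α + ((j : ℕ) : ℝ) - 1) * (x - ξ) ^ (α + ((j : ℕ) : ℝ) - 1) :=
      Real.mul_rpow hβ.le hxi.le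
    rw [h2]
    have h3 : (x - ξ) ^ (α + ((j : ℕ) : ℝ) - 1)
        = (x - ξ) ^ (((j : ℕ) : ℝ)) * (x - ξ) ^ (α - 1) := by
      rw [← Real.rpow_add hxi]; ring_nf
    rw [h3, Real.rpow_natCast]
    field_simp
  have hint2 : ∀ j : Fin (n + 2),
      IntegrableOn (fun x => D j * h j (β * x - β * ξ)) (Ioi kbar) := by
    intro j
    refine Integrable.const_mul ?_ (D j)
    have h1 : IntegrableOn (fun u => h j (u - β * ξ)) (Ioi (β * kbar)) := by
      rw [integrableOn_Ioi_sub_iff]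
      have : β * kbar - β * ξ = c := by rw [hc]; ring
      rw [this]; exact hint j
    exact (integrableOn_Ioi_comp_mul_left_iff (fun u => h j (u - β * ξ)) kbar hβ).mpr h1
  have hintg : ∀ j : Fin (n + 2), IntegrableOn (g j) (Ioi kbar) := fun j =>
    (hint2 j).congr_fun (fun x hx => ((heq j) hx).symm ▸ rfl) measurableSet_Ioi
  -- compute each integral
  have hval : ∀ j : Fin (n + 2), (∫ x in Ioi kbar, g j x)
      = D j * (β⁻¹ * ∫ u in Ioi c, h j u) := by
    intro j
    rw [setIntegral_congr_fun measurableSet_Ioi (heq j)]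
    rw [integral_const_mul]
    congr 1
    have step1 : (∫ x in Ioi kbar, h j (β * x - β * ξ))
        = β⁻¹ • ∫ u in Ioi (β * kbar), h j (u - β * ξ) :=
      integral_comp_mul_left_Ioi (fun u => h j (u - β * ξ)) kbar hβ
    rw [step1, integral_Ioi_sub (h j) (β * kbar) (β * ξ)]
    have : β * kbar - β * ξ = c := by rw [hc]; ring
    rw [this, smul_eq_mul]
  -- arithmetic identity for constants
  have hconst : ∀ j : Fin (n + 2),
      D j * β⁻¹ = (Real.Gamma α * β ^ (j : ℕ))⁻¹ := by
    intro j
    have h4 : β ^ α = β ^ (α + ((j : ℕ) : ℝ) - 1) * β ^ ((1:ℝ) - ((j : ℕ) : ℝ)) := by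
      rw [← Real.rpow_add hβ]
      congr 1
      ring
    have h5 : β ^ ((1:ℝ) - ((j : ℕ) : ℝ)) = β / β ^ (j : ℕ) := by
      rw [Real.rpow_sub hβ, Real.rpow_one, Real.rpow_natCast]
    have hβs : (0:ℝ) < β ^ (α + ((j : ℕ) : ℝ) - 1) := Real.rpow_pos_of_pos hβ _
    have hβj : (0:ℝ) < β ^ (j : ℕ) := pow_pos hβ _
    rw [hD]
    rw [h5] at h4
    field_simp [h4]
    rw [h4, mul_assoc, div_mul_cancel₀ _ hβj.ne']
  -- assemble
  rw [integral_const_mul]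
  congr 1
  rw [integral_finset_sum _ (fun j _ => (hintg j).const_mul (p n j))]
  refine Finset.sum_congr rfl fun j _ => ?_
  rw [integral_const_mul, hval j]
  rw [div_eq_mul_inv, ← hconst j]
  ring
end

section
/- Let (Ω, F, P) be a probability space carrying real random variables M and C with |M| ≤ K₁ almost surely, 0 < C ≤ K₂ almost surely, and E[C^{−1/2}] < ∞, for constants K₁, K₂ > 0. Define the probability density g(x) = E[ (2πC)^{−1/2} exp(−(x − M)²/(2C)) ] on ℝ, and let w(x) = Σ_{k=1}^K c_k (2πσ_k²)^{−1/2} exp(−(x − μ_k)²/(2σ_k²)) be a Gaussian mixture density with weights c_k > 0 summing to 1, means μ_k ∈ ℝ, and variances σ_k² > 0. If σ_k² > K₂/2 for some k ∈ {1,…,K}, then the likelihood ratio ℓ = g/w belongs to L²_w, i.e. ∫_ℝ g(x)²/w(x) dx < ∞. -/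
open MeasureTheory Real

set_option maxHeartbeats 1000000 in
/-- If the log-price density is the Gaussian mixture
`g(x) = E[(2πC)^{−1/2} exp(−(x−M)²/(2C))]` with `|M| ≤ K₁` a.s.,
`0 < C ≤ K₂` a.s. and `E[C^{−1/2}] < ∞`, and `w` is a finite Gaussian mixture
density one of whose components has variance `σ_k² > K₂/2`, then the likelihood
ratio `ℓ = g/w` belongs to `L²_w`, i.e. `∫ g²/w < ∞`. -/
theorem likelihood_ratio_in_L2
    {Ω : Type*} [MeasurableSpace Ω] (P : Measure Ω) [IsProbabilityMeasure P]
    (M C : Ω → ℝ) (hM_meas : Measurable M) (hC_meas : Measurable C)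
    (K₁ K₂ : ℝ) (hK₁ : 0 < K₁) (hK₂ : 0 < K₂)
    (hM : ∀ᵐ ω ∂P, |M ω| ≤ K₁)
    (hC : ∀ᵐ ω ∂P, 0 < C ω ∧ C ω ≤ K₂)
    (hCint : Integrable (fun ω => (C ω) ^ (-(1 : ℝ) / 2)) P)
    (g : ℝ → ℝ)
    (hg : ∀ x, g x = ∫ ω, (2 * π * C ω) ^ (-(1 : ℝ) / 2)
      * Real.exp (-((x - M ω) ^ 2 / (2 * C ω))) ∂P)
    (K : ℕ) (hK : 0 < K)
    (c μk σ : Fin K → ℝ)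
    (hc_pos : ∀ k, 0 < c k) (hc_sum : ∑ k, c k = 1)
    (hσ_pos : ∀ k, 0 < σ k)
    (w : ℝ → ℝ)
    (hw : ∀ x, w x = ∑ k, c k * ((2 * π * (σ k) ^ 2) ^ (-(1 : ℝ) / 2)
      * Real.exp (-((x - μk k) ^ 2 / (2 * (σ k) ^ 2)))))
    (hvar : ∃ k, K₂ / 2 < (σ k) ^ 2) :
    Integrable (fun x : ℝ => g x ^ 2 / w x) := by
  classical
  obtain ⟨k₀, hvk⟩ := hvar
  have hπ : 0 < π := Real.pi_pos
  have hσ0 : 0 < σ k₀ := hσ_pos k₀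
  have hvpos : 0 < (σ k₀) ^ 2 := by positivity
  have hck : 0 < c k₀ := hc_pos k₀
  have hSpos : 0 < (2 * π * (σ k₀) ^ 2) ^ (-(1 : ℝ) / 2) :=
    Real.rpow_pos_of_pos (by positivity) _
  have hI : 0 ≤ ∫ ω, (C ω) ^ (-(1 : ℝ) / 2) ∂P := by
    refine integral_nonneg_of_ae ?_
    filter_upwards [hC] with ω hω
    exact Real.rpow_nonneg hω.1.le _
  -- nonnegativity of g
  have hg0 : ∀ x, 0 ≤ g x := by
    intro x
    rw [hg x]
    refine integral_nonneg_of_ae ?_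
    filter_upwards [hC] with ω hω
    have h1 := hω.1
    positivity
  -- pointwise upper bound on g
  set A : ℝ := Real.exp (K₁ ^ 2 / (2 * K₂)) * (2 * π) ^ (-(1 : ℝ) / 2)
      * (∫ ω, (C ω) ^ (-(1 : ℝ) / 2) ∂P) with hAdef
  have hA0 : 0 ≤ A := by rw [hAdef]; positivity
  have hg_le : ∀ x, g x ≤ A * Real.exp (-(|x| - K₁) ^ 2 / (2 * K₂)) := by
    intro x
    rw [hg x]
    have hint : Integrable (fun ω => ((2 * π) ^ (-(1 : ℝ) / 2)
        * (Real.exp (K₁ ^ 2 / (2 * K₂)) * Real.exp (-(|x| - K₁) ^ 2 / (2 * K₂))))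
        * (C ω) ^ (-(1 : ℝ) / 2)) P := hCint.const_mul _
    have hle : ∫ ω, (2 * π * C ω) ^ (-(1 : ℝ) / 2)
          * Real.exp (-((x - M ω) ^ 2 / (2 * C ω))) ∂P
        ≤ ∫ ω, ((2 * π) ^ (-(1 : ℝ) / 2)
          * (Real.exp (K₁ ^ 2 / (2 * K₂)) * Real.exp (-(|x| - K₁) ^ 2 / (2 * K₂))))
          * (C ω) ^ (-(1 : ℝ) / 2) ∂P := by
      refine integral_mono_of_nonneg ?_ hint ?_
      · filter_upwards [hC] with ω hω
        have h1 := hω.1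
        positivity
      · filter_upwards [hC, hM] with ω hCω hMω
        have hC1 := hCω.1
        have hC2 := hCω.2
        have hexp : Real.exp (-((x - M ω) ^ 2 / (2 * C ω)))
            ≤ Real.exp (K₁ ^ 2 / (2 * K₂)) * Real.exp (-(|x| - K₁) ^ 2 / (2 * K₂)) := by
          rw [← Real.exp_add, Real.exp_le_exp,
            show K₁ ^ 2 / (2 * K₂) + -(|x| - K₁) ^ 2 / (2 * K₂)
              = (K₁ ^ 2 - (|x| - K₁) ^ 2) / (2 * K₂) from by ring,
            show -((x - M ω) ^ 2 / (2 * C ω)) = (-(x - M ω) ^ 2) / (2 * C ω) from by ring,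
            div_le_div_iff₀ (by linarith) (by linarith)]
          rcases le_or_gt K₁ |x| with h | h
          · have h1 : |x| - K₁ ≤ |x - M ω| := by
              have h2 := abs_sub_abs_le_abs_sub x (M ω)
              linarith
            have h2 : (|x| - K₁) ^ 2 ≤ (x - M ω) ^ 2 := by
              rw [← sq_abs (x - M ω)]
              exact pow_le_pow_left₀ (by linarith) h1 2
            nlinarith [mul_nonneg (sub_nonneg.2 h2) hC1.le,
              mul_nonneg (sq_nonneg (x - M ω)) (sub_nonneg.2 hC2),
              mul_nonneg (sq_nonneg K₁) hC1.le]
          · have h0 := abs_nonneg x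
            have h2 : (|x| - K₁) ^ 2 ≤ K₁ ^ 2 := sq_le_sq' (by linarith) (by linarith)
            nlinarith [mul_nonneg (sub_nonneg.2 h2) hC1.le,
              mul_nonneg (sq_nonneg (x - M ω)) hK₂.le]
        calc (2 * π * C ω) ^ (-(1 : ℝ) / 2) * Real.exp (-((x - M ω) ^ 2 / (2 * C ω)))
            = (2 * π) ^ (-(1 : ℝ) / 2) * (C ω) ^ (-(1 : ℝ) / 2)
              * Real.exp (-((x - M ω) ^ 2 / (2 * C ω))) := by
              rw [Real.mul_rpow (by positivity) hC1.le]
          _ ≤ (2 * π) ^ (-(1 : ℝ) / 2) * (C ω) ^ (-(1 : ℝ) / 2)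
              * (Real.exp (K₁ ^ 2 / (2 * K₂)) * Real.exp (-(|x| - K₁) ^ 2 / (2 * K₂))) := by
              refine mul_le_mul_of_nonneg_left hexp ?_
              positivity
          _ = ((2 * π) ^ (-(1 : ℝ) / 2)
              * (Real.exp (K₁ ^ 2 / (2 * K₂)) * Real.exp (-(|x| - K₁) ^ 2 / (2 * K₂))))
              * (C ω) ^ (-(1 : ℝ) / 2) := by ring
    calc ∫ ω, (2 * π * C ω) ^ (-(1 : ℝ) / 2)
          * Real.exp (-((x - M ω) ^ 2 / (2 * C ω))) ∂P
        ≤ ∫ ω, ((2 * π) ^ (-(1 : ℝ) / 2)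
          * (Real.exp (K₁ ^ 2 / (2 * K₂)) * Real.exp (-(|x| - K₁) ^ 2 / (2 * K₂))))
          * (C ω) ^ (-(1 : ℝ) / 2) ∂P := hle
      _ = ((2 * π) ^ (-(1 : ℝ) / 2)
          * (Real.exp (K₁ ^ 2 / (2 * K₂)) * Real.exp (-(|x| - K₁) ^ 2 / (2 * K₂))))
          * ∫ ω, (C ω) ^ (-(1 : ℝ) / 2) ∂P := integral_const_mul _ _
      _ = A * Real.exp (-(|x| - K₁) ^ 2 / (2 * K₂)) := by rw [hAdef]; ring
  -- positivity and lower bound for w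
  have hw0 : ∀ x, 0 < w x := by
    intro x
    rw [hw x]
    refine Finset.sum_pos (fun k _ => ?_) ⟨k₀, Finset.mem_univ k₀⟩
    have h1 := hc_pos k
    have h2 := hσ_pos k
    positivity
  have hw_lb : ∀ x, c k₀ * ((2 * π * (σ k₀) ^ 2) ^ (-(1 : ℝ) / 2)
      * Real.exp (-((x - μk k₀) ^ 2 / (2 * (σ k₀) ^ 2)))) ≤ w x := by
    intro x
    rw [hw x]
    refine Finset.single_le_sum (f := fun k => c k * ((2 * π * (σ k) ^ 2) ^ (-(1 : ℝ) / 2)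
      * Real.exp (-((x - μk k) ^ 2 / (2 * (σ k) ^ 2))))) (fun k _ => ?_) (Finset.mem_univ k₀)
    have h1 := hc_pos k
    have h2 := hσ_pos k
    positivity
  -- measurability
  have hgm : Measurable g := by
    have hge : g = fun x => ∫ ω, (fun p : ℝ × Ω => (2 * π * C p.2) ^ (-(1 : ℝ) / 2)
        * Real.exp (-((p.1 - M p.2) ^ 2 / (2 * C p.2)))) (x, ω) ∂P := funext hg
    rw [hge]
    refine StronglyMeasurable.measurable
      (StronglyMeasurable.integral_prod_right'
        (f := fun p : ℝ × Ω => (2 * π * C p.2) ^ (-(1 : ℝ) / 2)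
          * Real.exp (-((p.1 - M p.2) ^ 2 / (2 * C p.2)))) ?_)
    refine Measurable.stronglyMeasurable ?_
    fun_prop
  have hwm : Measurable w := by
    have hwe : w = fun x => ∑ k, c k * ((2 * π * (σ k) ^ 2) ^ (-(1 : ℝ) / 2)
        * Real.exp (-((x - μk k) ^ 2 / (2 * (σ k) ^ 2)))) := funext hw
    rw [hwe]
    fun_prop
  have haesm : AEStronglyMeasurable (fun x => g x ^ 2 / w x)
      (volume : Measure ℝ) := ((hgm.pow_const 2).div hwm).aestronglyMeasurable
  -- constants for the final Gaussian domination
  set a : ℝ := 1 / K₂ - 1 / (2 * (σ k₀) ^ 2) with hadef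
  have hapos : 0 < a := by
    have h1 : 1 / (2 * (σ k₀) ^ 2) < 1 / K₂ :=
      one_div_lt_one_div_of_lt hK₂ (by linarith)
    rw [hadef]; linarith
  set b : ℝ := 2 * K₁ / K₂ + |μk k₀| / (σ k₀) ^ 2 with hbdef
  have hbnn : 0 ≤ b := by rw [hbdef]; positivity
  have hK₂' : K₂ ≠ 0 := ne_of_gt hK₂
  have hv' : (σ k₀) ^ 2 ≠ 0 := ne_of_gt hvpos
  have ha' : a ≠ 0 := ne_of_gt hapos
  -- key exponent inequality
  have key : ∀ x : ℝ, -(|x| - K₁) ^ 2 / (2 * K₂) + -(|x| - K₁) ^ 2 / (2 * K₂)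
      - -((x - μk k₀) ^ 2 / (2 * (σ k₀) ^ 2))
      ≤ (b ^ 2 / (2 * a) + (μk k₀) ^ 2 / (2 * (σ k₀) ^ 2)) + -(a / 2) * x ^ 2 := by
    intro x
    have hy2 : |x| ^ 2 = x ^ 2 := sq_abs x
    have hD2 : |μk k₀| ^ 2 = (μk k₀) ^ 2 := sq_abs (μk k₀)
    have hxm : (x - μk k₀) ^ 2 ≤ (|x| + |μk k₀|) ^ 2 := by
      have h1 : |x - μk k₀| ≤ |x| + |μk k₀| := by
        simpa [sub_eq_add_neg] using abs_add_le x (-(μk k₀))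
      rw [← sq_abs (x - μk k₀)]
      exact pow_le_pow_left₀ (abs_nonneg _) h1 2
    rw [← hy2, ← hD2]
    set y := |x| with hydef
    set D := |μk k₀| with hDdef
    clear_value y D
    have e3 : (x - μk k₀) ^ 2 / (2 * (σ k₀) ^ 2)
        ≤ (y + D) ^ 2 / (2 * (σ k₀) ^ 2) := by gcongr
    have e1 : -(y - K₁) ^ 2 / K₂ + (y + D) ^ 2 / (2 * (σ k₀) ^ 2)
        = -(a * y ^ 2) + b * y + D ^ 2 / (2 * (σ k₀) ^ 2) - K₁ ^ 2 / K₂ := by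
      rw [hadef, hbdef]
      field_simp
      ring
    have e2 : b * y ≤ a / 2 * y ^ 2 + b ^ 2 / (2 * a) := by
      have h := div_nonneg (sq_nonneg (a * y - b)) (by linarith : (0:ℝ) ≤ 2 * a)
      have e : (a * y - b) ^ 2 / (2 * a)
          = a / 2 * y ^ 2 + b ^ 2 / (2 * a) - b * y := by
        field_simp
        ring
      rw [e] at h
      linarith
    have e0 : -(y - K₁) ^ 2 / (2 * K₂) + -(y - K₁) ^ 2 / (2 * K₂)
        = -(y - K₁) ^ 2 / K₂ := by
      field_simp
      ring
    have hK12 : 0 ≤ K₁ ^ 2 / K₂ := by positivity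
    linarith [e0, e1, e2, e3]
  -- final domination
  refine Integrable.mono'
    ((integrable_exp_neg_mul_sq (half_pos hapos)).const_mul
      ((A ^ 2 / (c k₀ * (2 * π * (σ k₀) ^ 2) ^ (-(1 : ℝ) / 2)))
        * Real.exp (b ^ 2 / (2 * a) + (μk k₀) ^ 2 / (2 * (σ k₀) ^ 2))))
    haesm ?_
  refine ae_of_all _ fun x => ?_
  have h1 : 0 ≤ g x ^ 2 / w x := div_nonneg (sq_nonneg _) (hw0 x).le
  rw [Real.norm_eq_abs, abs_of_nonneg h1]
  calc g x ^ 2 / w x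
      ≤ (A * Real.exp (-(|x| - K₁) ^ 2 / (2 * K₂))) ^ 2
        / (c k₀ * ((2 * π * (σ k₀) ^ 2) ^ (-(1 : ℝ) / 2)
          * Real.exp (-((x - μk k₀) ^ 2 / (2 * (σ k₀) ^ 2))))) := by
        refine div_le_div₀ (by positivity) ?_ (by positivity) (hw_lb x)
        exact pow_le_pow_left₀ (hg0 x) (hg_le x) 2
    _ = A ^ 2 / (c k₀ * (2 * π * (σ k₀) ^ 2) ^ (-(1 : ℝ) / 2))
        * Real.exp (-(|x| - K₁) ^ 2 / (2 * K₂) + -(|x| - K₁) ^ 2 / (2 * K₂)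
          - -((x - μk k₀) ^ 2 / (2 * (σ k₀) ^ 2))) := by
        rw [Real.exp_sub, Real.exp_add]
        field_simp [Real.exp_ne_zero, hck.ne', hSpos.ne']
    _ ≤ A ^ 2 / (c k₀ * (2 * π * (σ k₀) ^ 2) ^ (-(1 : ℝ) / 2))
        * (Real.exp (b ^ 2 / (2 * a) + (μk k₀) ^ 2 / (2 * (σ k₀) ^ 2))
          * Real.exp (-(a / 2) * x ^ 2)) := by
        rw [← Real.exp_add]
        exact mul_le_mul_of_nonneg_left (Real.exp_le_exp.2 (key x)) (by positivity)
    _ = (A ^ 2 / (c k₀ * (2 * π * (σ k₀) ^ 2) ^ (-(1 : ℝ) / 2))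
        * Real.exp (b ^ 2 / (2 * a) + (μk k₀) ^ 2 / (2 * (σ k₀) ^ 2)))
        * Real.exp (-(a / 2) * x ^ 2) := by ring
end
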